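/- arXiv:2208.12115 — 7 statements merged into one kernel-verified Lean document; each statement's English description precedes it below -/
import Mathlib

section
/- Let X be a finite-dimensional normed space, C ⊆ X closed and convex, f : X → ℝ continuous, and suppose the quadratic growth condition f(x) ≥ f(x̄) + (δ/2)‖x − x̄‖² holds for all x ∈ C with ‖x − x̄‖ ≤ ε, where x̄ ∈ C and δ, ε > 0. Then for every continuous linear functional x* on X with ‖x*‖ < δε/2, the perturbed problem of minimizing f(x) + ⟨x*, x⟩ over C has a local minimizer z satisfying ‖z − x̄‖ ≤ 2δ⁻¹‖x*‖. -/
open Set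

/-- In finite dimensions, quadratic growth at `x̄` implies that every sufficiently small
linear perturbation of the problem has a local minimizer near `x̄`. -/
theorem perturbed_problem_has_local_minimizer
    {X : Type*} [NormedAddCommGroup X] [NormedSpace ℝ X] [FiniteDimensional ℝ X]
    (C : Set X) (hCclosed : IsClosed C) (hCconv : Convex ℝ C)
    (f : X → ℝ) (hf : Continuous f)
    (xbar : X) (hxbar : xbar ∈ C) (δ ε : ℝ) (hδ : 0 < δ) (hε : 0 < ε)
    (growth : ∀ x ∈ C, ‖x - xbar‖ ≤ ε →
      f xbar + δ / 2 * ‖x - xbar‖ ^ 2 ≤ f x)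
    (xstar : X →L[ℝ] ℝ) (hxstar : ‖xstar‖ < δ * ε / 2) :
    ∃ z ∈ C, ‖z - xbar‖ ≤ 2 * δ⁻¹ * ‖xstar‖ ∧
      IsLocalMinOn (fun x => f x + xstar x) C z := by
  set g : X → ℝ := fun x => f x + xstar x with hg
  set K : Set X := C ∩ Metric.closedBall xbar ε with hK
  have hKcomp : IsCompact K :=
    (isCompact_closedBall xbar ε).inter_left hCclosed
  have hxbarK : xbar ∈ K := ⟨hxbar, Metric.mem_closedBall_self hε.le⟩
  obtain ⟨z, hzK, hmin⟩ := hKcomp.exists_isMinOn ⟨xbar, hxbarK⟩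
    ((hf.add xstar.continuous).continuousOn)
  obtain ⟨hzC, hzball⟩ := hzK
  have hzε : ‖z - xbar‖ ≤ ε := by
    rwa [Metric.mem_closedBall, dist_eq_norm] at hzball
  set t : ℝ := ‖z - xbar‖ with ht
  have ht0 : 0 ≤ t := norm_nonneg _
  have hgz : g z ≤ g xbar := isMinOn_iff.mp hmin xbar hxbarK
  have hgrow : f xbar + δ / 2 * t ^ 2 ≤ f z := growth z hzC hzε
  have hdual : xstar xbar - xstar z ≤ ‖xstar‖ * t := by
    calc xstar xbar - xstar z = xstar (xbar - z) := by rw [map_sub]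
    _ ≤ ‖xstar (xbar - z)‖ := le_abs_self _
    _ ≤ ‖xstar‖ * ‖xbar - z‖ := xstar.le_opNorm _
    _ = ‖xstar‖ * t := by rw [norm_sub_rev]
  have hkey : δ / 2 * t ^ 2 ≤ ‖xstar‖ * t := by
    simp only [hg] at hgz
    linarith
  have hδi : δ * δ⁻¹ = 1 := mul_inv_cancel₀ hδ.ne'
  have hbound : t ≤ 2 * δ⁻¹ * ‖xstar‖ := by
    rcases eq_or_lt_of_le ht0 with h0 | h0
    · rw [← h0]
      positivity
    · have h1 : δ / 2 * t ≤ ‖xstar‖ := by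
        rcases le_or_gt (δ / 2 * t) ‖xstar‖ with h | h
        · exact h
        · nlinarith
      have hδinv : 0 < δ⁻¹ := inv_pos.mpr hδ
      nlinarith
  refine ⟨z, hzC, hbound, ?_⟩
  have htlt : t < ε := by
    have : 2 * δ⁻¹ * ‖xstar‖ < 2 * δ⁻¹ * (δ * ε / 2) := by
      have hδinv : 0 < δ⁻¹ := inv_pos.mpr hδ
      apply mul_lt_mul_of_pos_left hxstar
      positivity
    have heq : 2 * δ⁻¹ * (δ * ε / 2) = ε := by
      field_simp
    linarith
  have hball : Metric.ball z (ε - t) ∈ nhds z := Metric.ball_mem_nhds z (by linarith)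
  have hmem : C ∩ Metric.ball z (ε - t) ∈ nhdsWithin z C :=
    Filter.inter_mem self_mem_nhdsWithin (mem_nhdsWithin_of_mem_nhds hball)
  refine Filter.eventually_of_mem hmem ?_
  rintro x ⟨hxC, hxball⟩
  apply isMinOn_iff.mp hmin x
  refine ⟨hxC, ?_⟩
  rw [Metric.mem_closedBall, dist_eq_norm]
  have hxz : ‖x - z‖ < ε - t := by rwa [Metric.mem_ball, dist_eq_norm] at hxball
  have : ‖x - xbar‖ ≤ ‖x - z‖ + ‖z - xbar‖ := by
    have := norm_add_le (x - z) (z - xbar)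
    simpa using this
  linarith
end

section
/- Let S be the Volterra operator on L²(0,1). For every (t, u) ∈ ℝ × L²(0,1) with |u| ≤ t a.e., the quantity 2t² + 2‖Su‖²_{L²} − ‖u‖²_{L²} is at least (1/3)t², and consequently at least (1/6)(t² + ‖u‖²_{L²}). -/
open MeasureTheory Set

/-- On the cone `|u| ≤ t` a.e., the quadratic form
`2t² + 2‖Su‖² − ‖u‖²` is bounded below by `(1/3)t²` and by `(1/6)(t² + ‖u‖²)`. -/
theorem second_order_form_coercive_on_cone
    (u : ℝ → ℝ) (hu : AEStronglyMeasurable u (volume.restrict (Ioo (0:ℝ) 1)))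
    (t : ℝ) (hbound : ∀ᵐ x ∂(volume.restrict (Ioo (0:ℝ) 1)), |u x| ≤ t) :
    (1 / 3) * t ^ 2 ≤
      2 * t ^ 2 + 2 * (∫ x in Ioo (0:ℝ) 1, (∫ ξ in Ioo 0 x, u ξ) ^ 2)
        - ∫ x in Ioo (0:ℝ) 1, u x ^ 2 ∧
    (1 / 6) * (t ^ 2 + ∫ x in Ioo (0:ℝ) 1, u x ^ 2) ≤
      2 * t ^ 2 + 2 * (∫ x in Ioo (0:ℝ) 1, (∫ ξ in Ioo 0 x, u ξ) ^ 2)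
        - ∫ x in Ioo (0:ℝ) 1, u x ^ 2 := by
  have hint : Integrable (fun x => u x ^ 2) (volume.restrict (Ioo (0:ℝ) 1)) := by
    refine (integrable_const (t ^ 2)).mono' (hu.mul hu |>.congr ?_) ?_
    · filter_upwards with x; simp [Pi.mul_apply, sq]
    · filter_upwards [hbound] with x hx
      rw [Real.norm_eq_abs, abs_pow]
      exact pow_le_pow_left₀ (abs_nonneg _) hx 2
  have h1 : ∫ x in Ioo (0:ℝ) 1, u x ^ 2 ≤ t ^ 2 := by
    calc ∫ x in Ioo (0:ℝ) 1, u x ^ 2 ≤ ∫ _x in Ioo (0:ℝ) 1, t ^ 2 := by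
          refine integral_mono_ae hint (integrable_const _) ?_
          filter_upwards [hbound] with x hx
          calc u x ^ 2 = |u x| ^ 2 := by rw [sq_abs]
            _ ≤ t ^ 2 := pow_le_pow_left₀ (abs_nonneg _) hx 2
      _ = t ^ 2 := by simp
  have h2 : 0 ≤ ∫ x in Ioo (0:ℝ) 1, (∫ ξ in Ioo 0 x, u ξ) ^ 2 :=
    integral_nonneg fun x => sq_nonneg _
  have h3 : 0 ≤ ∫ x in Ioo (0:ℝ) 1, u x ^ 2 := integral_nonneg fun x => sq_nonneg _
  have ht : 0 ≤ t ^ 2 := sq_nonneg _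
  constructor <;> linarith
end

section
/- Define f₀(t, u) = t² + ‖Su‖²_{L²} − (1/2)‖u‖²_{L²} on the cone C. Then the quadratic growth condition holds at (0,0): f₀(t,u) ≥ (1/12)(t² + ‖u‖²_{L²}) for all (t,u) ∈ C. -/
open MeasureTheory Set

/-- Quadratic growth of `f₀(t,u) = t² + ‖Su‖² − (1/2)‖u‖²` at `(0,0)` on the cone
`C = {(t,u) : |u| ≤ t a.e.}`: `f₀(t,u) ≥ (1/12)(t² + ‖u‖²)`. -/
theorem f0_quadratic_growth_on_cone
    (u : ℝ → ℝ) (hu : AEStronglyMeasurable u (volume.restrict (Ioo (0:ℝ) 1)))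
    (t : ℝ) (hbound : ∀ᵐ x ∂(volume.restrict (Ioo (0:ℝ) 1)), |u x| ≤ t) :
    (1 / 12) * (t ^ 2 + ∫ x in Ioo (0:ℝ) 1, u x ^ 2) ≤
      t ^ 2 + (∫ x in Ioo (0:ℝ) 1, (∫ ξ in Ioo 0 x, u ξ) ^ 2)
        - (1 / 2) * ∫ x in Ioo (0:ℝ) 1, u x ^ 2 := by
  have hne : volume.restrict (Ioo (0:ℝ) 1) ≠ 0 := by
    simp [Measure.restrict_eq_zero]
  have : (ae (volume.restrict (Ioo (0:ℝ) 1))).NeBot := ae_neBot.mpr hne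
  obtain ⟨x₀, hx₀⟩ := hbound.exists
  have ht : 0 ≤ t := le_trans (abs_nonneg _) hx₀
  have hbd : ∀ᵐ x ∂(volume.restrict (Ioo (0:ℝ) 1)), ‖u x ^ 2‖ ≤ t ^ 2 := by
    filter_upwards [hbound] with x hx
    rw [Real.norm_eq_abs, abs_pow]
    exact pow_le_pow_left₀ (abs_nonneg _) hx 2
  have hint : Integrable (fun x => u x ^ 2) (volume.restrict (Ioo (0:ℝ) 1)) := by
    refine Integrable.mono' (integrable_const (t ^ 2)) ?_ hbd
    exact hu.pow 2
  have h1 : (∫ x in Ioo (0:ℝ) 1, u x ^ 2) ≤ t ^ 2 := by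
    have := integral_mono_ae hint (integrable_const (t ^ 2))
      (by filter_upwards [hbd] with x hx;
          exact le_trans (le_abs_self _) hx)
    simpa using this
  have h0 : 0 ≤ ∫ x in Ioo (0:ℝ) 1, u x ^ 2 :=
    integral_nonneg fun x => sq_nonneg _
  have h2 : 0 ≤ ∫ x in Ioo (0:ℝ) 1, (∫ ξ in Ioo 0 x, u ξ) ^ 2 :=
    integral_nonneg fun x => sq_nonneg _
  nlinarith
end

section
/- Let t̃ > 0 and let ũ minimize ‖Su‖²_{L²} − (1/2)‖u‖²_{L²} over {u ∈ L²(0,1) : |u| ≤ t̃ a.e.}. Then for a.e. x ∈ (0,1): if (S*Sũ)(x) > 0 then ũ(x) = −t̃, and if (S*Sũ)(x) < 0 then ũ(x) = t̃. -/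
open MeasureTheory Set

noncomputable def μ01 : Measure ℝ := volume.restrict (Ioo 0 1)


open scoped ENNReal RealInnerProductSpace

instance : IsFiniteMeasure μ01 := by
  unfold μ01
  exact ⟨by rw [Measure.restrict_apply_univ, Real.volume_Ioo]; norm_num⟩

lemma μ01_def : μ01 = volume.restrict (Ioo 0 1) := rfl

lemma μ01_univ_real : (μ01 univ).toReal = 1 := by
  rw [μ01, Measure.restrict_apply_univ, Real.volume_Ioo]; norm_num

lemma inner_eq_integral (f g : Lp ℝ 2 μ01) : ⟪f, g⟫ = ∫ x, f x * g x ∂μ01 := by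
  rw [MeasureTheory.L2.inner_def]
  simp [RCLike.inner_apply, conj_trivial]
  exact integral_congr_ae (Filter.Eventually.of_forall fun x => mul_comm _ _)

lemma norm_sq_eq_integral (f : Lp ℝ 2 μ01) : ‖f‖^2 = ∫ x, f x * f x ∂μ01 := by
  rw [← real_inner_self_eq_norm_sq]; exact inner_eq_integral f f

lemma integrable_mul (f g : Lp ℝ 2 μ01) : Integrable (fun x => f x * g x) μ01 := by
  have := MeasureTheory.L2.integrable_inner (𝕜 := ℝ) f g
  simpa [RCLike.inner_apply, conj_trivial, mul_comm] using this

lemma exists_small_subset {A : Set ℝ} (hA : MeasurableSet A) (h : μ01 A ≠ 0)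
    {ε : ℝ≥0∞} (hε : 0 < ε) :
    ∃ B : Set ℝ, MeasurableSet B ∧ B ⊆ A ∧ 0 < μ01 B ∧ μ01 B < ε := by
  obtain ⟨n, hn⟩ := ENNReal.exists_inv_nat_lt hε.ne'
  have hn0 : 0 < (n : ℝ) := by
    rcases Nat.eq_zero_or_pos n with h0 | h0
    · exfalso; subst h0; simp at hn
    · exact_mod_cast h0
  -- cover Ioo 0 1 by n intervals Ioc (k/n) ((k+1)/n)
  set C : ℕ → Set ℝ := fun k => A ∩ Ioo 0 1 ∩ Ioc ((k:ℝ)/n) ((k+1:ℝ)/n) with hC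
  have hcover : A ∩ Ioo 0 1 ⊆ ⋃ k ∈ Finset.range n, C k := by
    intro x ⟨hxA, hx01⟩
    have hx0 : 0 < x := hx01.1
    have hx1 : x < 1 := hx01.2
    have hnx : 0 < (n:ℝ) * x := mul_pos hn0 hx0
    set k := ⌈(n:ℝ) * x⌉₊ - 1 with hk
    have hceil : 1 ≤ ⌈(n:ℝ) * x⌉₊ := Nat.one_le_ceil_iff.mpr hnx
    have hk1 : (k : ℝ) + 1 = (⌈(n:ℝ) * x⌉₊ : ℝ) := by
      have : k + 1 = ⌈(n:ℝ) * x⌉₊ := Nat.succ_pred_eq_of_pos hceil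
      exact_mod_cast this
    have hkmem : k ∈ Finset.range n := by
      rw [Finset.mem_range]
      have : ⌈(n:ℝ) * x⌉₊ ≤ n := Nat.ceil_le.mpr (by nlinarith)
      omega
    refine mem_biUnion hkmem ⟨⟨hxA, hx01⟩, ?_, ?_⟩
    · rw [div_lt_iff₀ hn0, mul_comm]
      have : (k : ℝ) < (n:ℝ) * x := by
        have := Nat.ceil_lt_add_one (le_of_lt hnx)
        nlinarith [hk1]
      linarith
    · rw [le_div_iff₀ hn0, mul_comm]
      have := Nat.le_ceil ((n:ℝ) * x)
      linarith [hk1 ▸ this]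
  have hCk : ∃ k ∈ Finset.range n, μ01 (C k) ≠ 0 := by
    by_contra hall
    push_neg at hall
    have : μ01 (A ∩ Ioo 0 1) = 0 := by
      refine measure_mono_null hcover ?_
      refine (measure_biUnion_null_iff (Finset.range n).countable_toSet).mpr ?_
      intro k hk; exact hall k hk
    apply h
    have : volume (A ∩ Ioo 0 1) = 0 := by
      rw [μ01, Measure.restrict_apply (hA.inter measurableSet_Ioo)] at this
      simpa [inter_assoc] using this
    rw [μ01, Measure.restrict_apply hA]
    exact this
  obtain ⟨k, _, hk⟩ := hCk
  refine ⟨C k, (hA.inter measurableSet_Ioo).inter measurableSet_Ioc,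
    fun x hx => hx.1.1, hk.bot_lt, ?_⟩
  calc μ01 (C k) ≤ volume (Ioc ((k:ℝ)/n) ((k+1:ℝ)/n)) := by
        rw [μ01]
        exact le_trans (Measure.restrict_le_self _) (measure_mono (fun x hx => hx.2))
    _ = ENNReal.ofReal ((k+1:ℝ)/n - (k:ℝ)/n) := Real.volume_Ioc
    _ = (n : ℝ≥0∞)⁻¹ := by
        rw [show (k+1:ℝ)/n - (k:ℝ)/n = 1 / n by field_simp; ring]
        rw [one_div, ENNReal.ofReal_inv_of_pos hn0, ENNReal.ofReal_natCast]
    _ < ε := hn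

set_option maxHeartbeats 1000000 in
lemma key
    (S : Lp ℝ 2 μ01 →L[ℝ] Lp ℝ 2 μ01)
    (hS : ∀ u : Lp ℝ 2 μ01, ∀ᵐ x ∂μ01, (S u : ℝ → ℝ) x = ∫ ξ in Ioo 0 x, u ξ)
    (ttil : ℝ) (httil : 0 < ttil)
    (util : Lp ℝ 2 μ01) (hutil : ∀ᵐ x ∂μ01, |util x| ≤ ttil)
    (hmin : ∀ u : Lp ℝ 2 μ01, (∀ᵐ x ∂μ01, |u x| ≤ ttil) →
      ‖S util‖ ^ 2 - (1 / 2) * ‖util‖ ^ 2 ≤ ‖S u‖ ^ 2 - (1 / 2) * ‖u‖ ^ 2)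
    (f g : ℝ → ℝ) (hf : Measurable f) (hg : Measurable g)
    (hfe : (ContinuousLinearMap.adjoint S (S util) : ℝ → ℝ) =ᵐ[μ01] f)
    (hge : (util : ℝ → ℝ) =ᵐ[μ01] g)
    (σ : ℝ) (hσ : σ = 1 ∨ σ = -1) (δ : ℝ) (hδ : 0 < δ) :
    μ01 {x | δ ≤ σ * f x ∧ δ ≤ ttil + σ * g x} = 0 := by
  classical
  by_contra hA0
  have hσ2 : σ^2 = 1 := by rcases hσ with h | h <;> simp [h]
  have hσabs : |σ| = 1 := by rcases hσ with h | h <;> simp [h]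
  set ψ : Lp ℝ 2 μ01 := ContinuousLinearMap.adjoint S (S util) with hψ
  have hAm : MeasurableSet {x : ℝ | δ ≤ σ * f x ∧ δ ≤ ttil + σ * g x} :=
    (measurableSet_le measurable_const (hf.const_mul σ)).inter
      (measurableSet_le measurable_const ((hg.const_mul σ).const_add ttil))
  obtain ⟨B, hBm, hBA, hB0, hBε⟩ := exists_small_subset hAm hA0
    (ε := ENNReal.ofReal (δ^2/(2*ttil^2+1))) (by positivity)
  set m : ℝ := (μ01 B).toReal with hm
  have hm0 : 0 < m := ENNReal.toReal_pos hB0.ne' (measure_ne_top _ _)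
  have hmsmall : m * (2*ttil^2+1) < δ^2 := by
    have h1 : m < δ^2/(2*ttil^2+1) :=
      (ENNReal.lt_ofReal_iff_toReal_lt (measure_ne_top _ _)).mp hBε
    have h2 : (0:ℝ) < 2*ttil^2+1 := by positivity
    calc m * (2*ttil^2+1) < δ^2/(2*ttil^2+1) * (2*ttil^2+1) := by
          exact mul_lt_mul_of_pos_right h1 h2
      _ = δ^2 := by field_simp
  -- competitor
  set c : ℝ → ℝ := B.piecewise (fun _ => -σ * ttil) g with hc
  have hcmeas : Measurable c := Measurable.piecewise hBm measurable_const hg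
  have hgb : ∀ᵐ x ∂μ01, |g x| ≤ ttil := by
    filter_upwards [hge, hutil] with x h1 h2
    rw [← h1]; exact h2
  have hcb : ∀ᵐ x ∂μ01, |c x| ≤ ttil := by
    filter_upwards [hgb] with x hx
    by_cases hxB : x ∈ B
    · have hcx : c x = -σ * ttil := Set.piecewise_eq_of_mem _ _ _ hxB
      rw [hcx, show -σ*ttil = (-σ)*ttil by ring, abs_mul, abs_neg, hσabs, one_mul,
        abs_of_pos httil]
    · have hcx : c x = g x := Set.piecewise_eq_of_notMem _ _ _ hxB
      rw [hcx]; exact hx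
  have hmem : MemLp c 2 μ01 :=
    MemLp.of_bound hcmeas.aestronglyMeasurable ttil
      (by filter_upwards [hcb] with x hx; simpa [Real.norm_eq_abs] using hx)
  set u : Lp ℝ 2 μ01 := hmem.toLp c with hu
  have hu_ae : (u : ℝ → ℝ) =ᵐ[μ01] c := hmem.coeFn_toLp
  have hadm : ∀ᵐ x ∂μ01, |u x| ≤ ttil := by
    filter_upwards [hu_ae, hcb] with x h1 h2; rw [h1]; exact h2
  set w : Lp ℝ 2 μ01 := u - util with hw
  have hw_ae : (w : ℝ → ℝ) =ᵐ[μ01] fun x => B.indicator (fun y => -σ*ttil - g y) x := by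
    filter_upwards [Lp.coeFn_sub u util, hu_ae, hge] with x h1 h2 h3
    rw [← hw] at h1
    rw [h1]; simp only [Pi.sub_apply]; rw [h2, h3]
    by_cases hxB : x ∈ B
    · have hcx : c x = -σ * ttil := Set.piecewise_eq_of_mem _ _ _ hxB
      rw [Set.indicator_of_mem hxB, hcx]
    · have hcx : c x = g x := Set.piecewise_eq_of_notMem _ _ _ hxB
      rw [Set.indicator_of_notMem hxB, hcx, sub_self]
  -- step I1 : inner product bound
  have I1 : ⟪ψ, w⟫ ≤ -δ^2 * m := by
    rw [inner_eq_integral]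
    have hle : (fun x => (ψ : ℝ → ℝ) x * (w : ℝ → ℝ) x)
        ≤ᵐ[μ01] fun x => B.indicator (fun _ => -δ^2) x := by
      filter_upwards [hw_ae, hfe] with x hwx hfx
      rw [hwx, hfx]
      by_cases hxB : x ∈ B
      · obtain ⟨ha, hb⟩ := hBA hxB
        rw [Set.indicator_of_mem hxB, Set.indicator_of_mem hxB]
        rcases hσ with h | h
        · subst h
          simp only [one_mul] at ha hb ⊢
          nlinarith [mul_le_mul ha hb hδ.le (hδ.le.trans ha)]
        · subst h
          simp only [neg_one_mul] at ha hb ⊢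
          nlinarith [mul_le_mul ha hb hδ.le (hδ.le.trans ha)]
      · rw [Set.indicator_of_notMem hxB, Set.indicator_of_notMem hxB]
        simp
    have hInt2 : Integrable (fun x => B.indicator (fun _ => -δ^2) x) μ01 :=
      (integrable_const (-δ^2)).indicator hBm
    calc ∫ x, (ψ : ℝ → ℝ) x * (w : ℝ → ℝ) x ∂μ01
        ≤ ∫ x, B.indicator (fun _ => -δ^2) x ∂μ01 :=
          integral_mono_ae (integrable_mul ψ w) hInt2 hle
      _ = m • (-δ^2) := by rw [integral_indicator_const _ hBm]; rfl
      _ = -δ^2 * m := by rw [smul_eq_mul]; ring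
  -- step I2 : quadratic remainder bound
  have hwInt : Integrable (w : ℝ → ℝ) μ01 := (Lp.memLp w).integrable one_le_two
  have hwabs : ∫ x, |(w : ℝ → ℝ) x| ∂μ01 ≤ 2*ttil*m := by
    have hle : (fun x => |(w : ℝ → ℝ) x|) ≤ᵐ[μ01] fun x => B.indicator (fun _ => 2*ttil) x := by
      filter_upwards [hw_ae, hgb] with x hwx hgx
      rw [hwx]
      by_cases hxB : x ∈ B
      · rw [Set.indicator_of_mem hxB, Set.indicator_of_mem hxB]
        have h1 : |(-σ*ttil - g x)| ≤ |(-σ*ttil)| + |g x| := abs_sub _ _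
        have h2 : |(-σ*ttil)| = ttil := by
          rw [show -σ*ttil = (-σ)*ttil by ring, abs_mul, abs_neg, hσabs, one_mul,
            abs_of_pos httil]
        rw [h2] at h1; linarith
      · simp [Set.indicator_of_notMem hxB]
    calc ∫ x, |(w : ℝ → ℝ) x| ∂μ01 ≤ ∫ x, B.indicator (fun _ => 2*ttil) x ∂μ01 :=
          integral_mono_ae hwInt.abs ((integrable_const _).indicator hBm) hle
      _ = m • (2*ttil) := integral_indicator_const _ hBm
      _ = 2*ttil*m := by rw [smul_eq_mul]; ring
  have hSwb : ∀ᵐ x ∂μ01, |(S w : ℝ → ℝ) x| ≤ 2*ttil*m := by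
    have hae01 : ∀ᵐ x ∂μ01, x ∈ Ioo (0:ℝ) 1 := ae_restrict_mem measurableSet_Ioo
    filter_upwards [hS w, hae01] with x hx h01
    rw [hx]
    have hIoo : Ioo (0:ℝ) x ⊆ Ioo 0 1 := Ioo_subset_Ioo le_rfl h01.2.le
    calc |∫ ξ in Ioo 0 x, (w : ℝ → ℝ) ξ| ≤ ∫ ξ in Ioo 0 x, |(w : ℝ → ℝ) ξ| := by
          simpa [Real.norm_eq_abs] using
            norm_integral_le_integral_norm (μ := volume.restrict (Ioo 0 x)) (w : ℝ → ℝ)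
      _ ≤ ∫ ξ in Ioo 0 1, |(w : ℝ → ℝ) ξ| := by
          refine setIntegral_mono_set hwInt.abs ?_ hIoo.eventuallyLE
          exact Filter.Eventually.of_forall fun y => abs_nonneg _
      _ = ∫ x, |(w : ℝ → ℝ) x| ∂μ01 := by congr 1
      _ ≤ 2*ttil*m := hwabs
  have I2 : ‖S w‖^2 ≤ (2*ttil*m)^2 := by
    rw [norm_sq_eq_integral]
    have hle : (fun x => (S w : ℝ → ℝ) x * (S w : ℝ → ℝ) x)
        ≤ᵐ[μ01] fun _ => (2*ttil*m)^2 := by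
      filter_upwards [hSwb] with x hx
      nlinarith [abs_mul_abs_self ((S w : ℝ → ℝ) x), abs_nonneg ((S w : ℝ → ℝ) x)]
    calc ∫ x, (S w : ℝ → ℝ) x * (S w : ℝ → ℝ) x ∂μ01 ≤ ∫ _x, (2*ttil*m)^2 ∂μ01 :=
          integral_mono_ae (integrable_mul _ _) (integrable_const _) hle
      _ = (2*ttil*m)^2 := by rw [integral_const]; show (μ01 univ).toReal • _ = _; rw [μ01_univ_real, one_smul]
  -- step I3 : the norm of u is at least that of util
  have I3 : 0 ≤ ‖u‖^2 - ‖util‖^2 := by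
    rw [norm_sq_eq_integral, norm_sq_eq_integral,
      ← integral_sub (integrable_mul u u) (integrable_mul util util)]
    apply integral_nonneg_of_ae
    filter_upwards [hu_ae, hge, hgb] with x h1 h2 h3
    simp only [Pi.zero_apply]
    rw [h1, h2]
    by_cases hxB : x ∈ B
    · have hcx : c x = -σ * ttil := Set.piecewise_eq_of_mem _ _ _ hxB
      rw [hcx]
      have h4 := abs_le.mp h3
      nlinarith [h4.1, h4.2, mul_nonneg (sub_nonneg.mpr h4.2)
        (by linarith [h4.1] : (0:ℝ) ≤ ttil + g x)]
    · have hcx : c x = g x := Set.piecewise_eq_of_notMem _ _ _ hxB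
      rw [hcx, sub_self]
  -- conclusion
  have hSu : S u = S util + S w := by rw [hw, map_sub]; abel
  have hnorm : ‖S u‖^2 = ‖S util‖^2 + 2*⟪S util, S w⟫ + ‖S w‖^2 := by
    calc ‖S u‖^2 = ‖S util + S w‖^2 := by rw [← hSu]
      _ = ‖S util‖^2 + 2*⟪S util, S w⟫ + ‖S w‖^2 := norm_add_sq_real _ _
  have hinner : ⟪ψ, w⟫ = ⟪S util, S w⟫ := ContinuousLinearMap.adjoint_inner_left S w (S util)
  have hmain := hmin u hadm
  have hfinal : 0 ≤ 2*⟪ψ, w⟫ + ‖S w‖^2 - (1/2)*(‖u‖^2 - ‖util‖^2) := by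
    linarith [hmain, hnorm, hinner]
  nlinarith [I1, I2, I3, hfinal, hm0, mul_lt_mul_of_pos_left hmsmall hm0, mul_pos hm0 hm0]

/-- Pontryagin-type pointwise characterization: if `ũ` minimizes
`‖Su‖² − (1/2)‖u‖²` over `{u : |u| ≤ t̃ a.e.}` with `t̃ > 0`, then a.e.
`(S*Sũ)(x) > 0 ⟹ ũ(x) = −t̃` and `(S*Sũ)(x) < 0 ⟹ ũ(x) = t̃`. -/
theorem pontryagin_pointwise_characterization
    (S : Lp ℝ 2 μ01 →L[ℝ] Lp ℝ 2 μ01)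
    (hS : ∀ u : Lp ℝ 2 μ01, ∀ᵐ x ∂μ01, (S u : ℝ → ℝ) x = ∫ ξ in Ioo 0 x, u ξ)
    (ttil : ℝ) (httil : 0 < ttil)
    (util : Lp ℝ 2 μ01) (hutil : ∀ᵐ x ∂μ01, |util x| ≤ ttil)
    (hmin : ∀ u : Lp ℝ 2 μ01, (∀ᵐ x ∂μ01, |u x| ≤ ttil) →
      ‖S util‖ ^ 2 - (1 / 2) * ‖util‖ ^ 2 ≤ ‖S u‖ ^ 2 - (1 / 2) * ‖u‖ ^ 2) :
    ∀ᵐ x ∂μ01,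
      ((ContinuousLinearMap.adjoint S (S util) : ℝ → ℝ) x > 0 → util x = -ttil) ∧
      ((ContinuousLinearMap.adjoint S (S util) : ℝ → ℝ) x < 0 → util x = ttil) := by
  have hψm := Lp.aestronglyMeasurable (ContinuousLinearMap.adjoint S (S util))
  have hum := Lp.aestronglyMeasurable util
  set f : ℝ → ℝ := hψm.mk _ with hfdef
  set g : ℝ → ℝ := hum.mk _ with hgdef
  have hfmeas : Measurable f := hψm.stronglyMeasurable_mk.measurable
  have hgmeas : Measurable g := hum.stronglyMeasurable_mk.measurable
  have hfe : (ContinuousLinearMap.adjoint S (S util) : ℝ → ℝ) =ᵐ[μ01] f := hψm.ae_eq_mk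
  have hge : (util : ℝ → ℝ) =ᵐ[μ01] g := hum.ae_eq_mk
  have hkey : ∀ σ : ℝ, σ = 1 ∨ σ = -1 → ∀ n : ℕ,
      μ01 {x | 1/((n:ℝ)+1) ≤ σ * f x ∧ 1/((n:ℝ)+1) ≤ ttil + σ * g x} = 0 := fun σ hσ n =>
    key S hS ttil httil util hutil hmin f g hfmeas hgmeas hfe hge σ hσ
      (1/((n:ℝ)+1)) (by positivity)
  have h1 : ∀ᵐ x ∂μ01, ∀ n : ℕ,
      ¬(1/((n:ℝ)+1) ≤ 1 * f x ∧ 1/((n:ℝ)+1) ≤ ttil + 1 * g x) := by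
    rw [ae_all_iff]
    intro n
    exact measure_eq_zero_iff_ae_notMem.mp (hkey 1 (Or.inl rfl) n)
  have h2 : ∀ᵐ x ∂μ01, ∀ n : ℕ,
      ¬(1/((n:ℝ)+1) ≤ (-1) * f x ∧ 1/((n:ℝ)+1) ≤ ttil + (-1) * g x) := by
    rw [ae_all_iff]
    intro n
    exact measure_eq_zero_iff_ae_notMem.mp (hkey (-1) (Or.inr rfl) n)
  filter_upwards [h1, h2, hutil, hfe, hge] with x hx1 hx2 hxu hxf hxg
  have habs := abs_le.mp hxu
  constructor
  · intro hpos
    by_contra hne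
    have ha : 0 < f x := by rw [← hxf]; exact hpos
    have hb : 0 < ttil + g x := by
      rw [← hxg]
      rcases lt_or_eq_of_le habs.1 with h | h
      · linarith
      · exact absurd h.symm hne
    obtain ⟨n, hn⟩ := exists_nat_one_div_lt (lt_min_iff.mpr ⟨ha, hb⟩)
    exact hx1 n ⟨by rw [one_mul]; exact (hn.trans_le (min_le_left _ _)).le,
      by rw [one_mul]; exact (hn.trans_le (min_le_right _ _)).le⟩
  · intro hneg
    by_contra hne
    have ha : 0 < (-1) * f x := by rw [← hxf]; linarith
    have hb : 0 < ttil + (-1) * g x := by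
      rw [← hxg]
      rcases lt_or_eq_of_le habs.2 with h | h
      · linarith
      · exact absurd h hne
    obtain ⟨n, hn⟩ := exists_nat_one_div_lt (lt_min_iff.mpr ⟨ha, hb⟩)
    exact hx2 n ⟨(hn.trans_le (min_le_left _ _)).le, (hn.trans_le (min_le_right _ _)).le⟩
end

section
/- Let t̃ > 0 and u ∈ L²(0,1) with |u| ≤ t̃ a.e. Suppose that for a.e. x the implications hold: (S*Su)(x) > 0 ⟹ u(x) = −t̃ and (S*Su)(x) < 0 ⟹ u(x) = t̃. Then S*Su ≡ 0 on [0,1], and hence u = 0, contradicting |u| = t̃ > 0 a.e. where S*Su = 0. Consequently no such u can be a minimizer with t̃ > 0. -/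
open MeasureTheory Set

instance inst_s12 : IsFiniteMeasure μ01 := by
  constructor
  simp [μ01, Real.volume_Ioo, Measure.restrict_apply_univ]

/-- Injectivity of the Volterra operator: if the primitive of an integrable function
vanishes a.e. on (0,1), the function vanishes a.e. -/
lemma primitive_zero (f : ℝ → ℝ) (hf : Integrable f μ01)
    (h : ∀ᵐ x ∂μ01, (∫ ξ in Ioo 0 x, f ξ) = 0) : f =ᵐ[μ01] 0 := by
  have hIoo : IntegrableOn f (Ioo 0 1) volume := hf
  have hIcc : IntegrableOn f (Icc 0 1) volume := by
    rw [IntegrableOn, ← Measure.restrict_congr_set Ioo_ae_eq_Icc]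
    exact hIoo
  set G : ℝ → ℝ := fun x => ∫ t in Ioc 0 x, f t with hGdef
  have hGc : ContinuousOn G (Icc 0 1) := intervalIntegral.continuousOn_primitive hIcc
  have hG0ae : G =ᶠ[ae (volume.restrict (Ioo 0 1))] 0 := by
    have h' : ∀ᵐ x ∂(volume.restrict (Ioo 0 1)), (∫ ξ in Ioo 0 x, f ξ) = 0 := h
    filter_upwards [h'] with x hx
    simp only [hGdef, integral_Ioc_eq_integral_Ioo, Pi.zero_apply]
    exact hx
  have hEq : EqOn G 0 (Ioo 0 1) :=
    Measure.eqOn_open_of_ae_eq hG0ae isOpen_Ioo (hGc.mono Ioo_subset_Icc_self)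
      continuousOn_const
  have hG1 : G 1 = 0 := by
    have hmem : (1:ℝ) ∈ closure (Ioo (0:ℝ) 1) := by
      rw [closure_Ioo (by norm_num : (0:ℝ) ≠ 1)]
      exact ⟨by norm_num, le_refl _⟩
    haveI hne : (nhdsWithin (1:ℝ) (Ioo (0:ℝ) 1)).NeBot :=
      mem_closure_iff_nhdsWithin_neBot.mp hmem
    have t1 : Filter.Tendsto G (nhdsWithin (1:ℝ) (Ioo (0:ℝ) 1)) (nhds (G 1)) :=
      ((hGc 1 ⟨by norm_num, le_refl _⟩).mono_left (nhdsWithin_mono _ Ioo_subset_Icc_self))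
    have t2 : Filter.Tendsto G (nhdsWithin (1:ℝ) (Ioo (0:ℝ) 1)) (nhds 0) := by
      apply Filter.Tendsto.congr' _ tendsto_const_nhds
      filter_upwards [eventually_mem_nhdsWithin] with y hy
      exact (hEq hy).symm
    exact tendsto_nhds_unique t1 t2
  have hG : ∀ x ∈ Icc (0:ℝ) 1, G x = 0 := by
    intro x hx
    rcases eq_or_lt_of_le hx.1 with h0 | h0
    · simp [hGdef, ← h0]
    rcases eq_or_lt_of_le hx.2 with h1 | h1
    · rw [h1]; exact hG1
    · exact hEq ⟨h0, h1⟩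
  have key : ∀ a : ℝ, ∫ x in Iic a, f x ∂μ01 = 0 := by
    intro a
    rw [show μ01 = volume.restrict (Ioo 0 1) from rfl,
      Measure.restrict_restrict measurableSet_Iic]
    rcases le_or_gt a 0 with ha | ha
    · have hempty : Iic a ∩ Ioo (0:ℝ) 1 = ∅ := by
        ext y; simp only [mem_inter_iff, mem_Iic, mem_Ioo, mem_empty_iff_false, iff_false]
        rintro ⟨h1, h2, h3⟩; linarith
      simp [hempty]
    rcases le_or_gt 1 a with ha1 | ha1
    · have : Iic a ∩ Ioo (0:ℝ) 1 = Ioo 0 1 := by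
        apply inter_eq_self_of_subset_right
        intro y hy; exact le_trans hy.2.le ha1
      rw [this, ← integral_Ioc_eq_integral_Ioo]
      exact hG1
    · have : Iic a ∩ Ioo (0:ℝ) 1 = Ioc 0 a := by
        ext y
        simp only [mem_inter_iff, mem_Iic, mem_Ioo, mem_Ioc]
        constructor
        · rintro ⟨h1, h2, h3⟩; exact ⟨h2, h1⟩
        · rintro ⟨h1, h2⟩; exact ⟨h2, h1, lt_of_le_of_lt h2 ha1⟩
      rw [this]
      exact hG a ⟨ha.le, ha1.le⟩
  set νp : Measure ℝ := μ01.withDensity (fun x => ENNReal.ofReal (f x)) with hνp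
  set νm : Measure ℝ := μ01.withDensity (fun x => ENNReal.ofReal (-f x)) with hνm
  haveI h1p : IsFiniteMeasure νp := by
    constructor
    rw [hνp, withDensity_apply _ MeasurableSet.univ, Measure.restrict_univ]
    calc ∫⁻ a, ENNReal.ofReal (f a) ∂μ01 ≤ ∫⁻ a, ‖f a‖₊ ∂μ01 := by
          apply lintegral_mono; intro a
          show ENNReal.ofReal (f a) ≤ (‖f a‖₊ : ENNReal)
          rw [← ENNReal.ofReal_coe_nnreal, coe_nnnorm, Real.norm_eq_abs]
          exact ENNReal.ofReal_le_ofReal (le_abs_self _)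
      _ < ⊤ := hf.2
  haveI h1m : IsFiniteMeasure νm := by
    constructor
    rw [hνm, withDensity_apply _ MeasurableSet.univ, Measure.restrict_univ]
    calc ∫⁻ a, ENNReal.ofReal (-f a) ∂μ01 ≤ ∫⁻ a, ‖f a‖₊ ∂μ01 := by
          apply lintegral_mono; intro a
          show ENNReal.ofReal (-f a) ≤ (‖f a‖₊ : ENNReal)
          rw [← ENNReal.ofReal_coe_nnreal, coe_nnnorm, Real.norm_eq_abs]
          exact ENNReal.ofReal_le_ofReal (neg_le_abs _)
      _ < ⊤ := hf.2
  have hrepr : ∀ s : Set ℝ, MeasurableSet s →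
      ∫ x in s, f x ∂μ01 = (νp s).toReal - (νm s).toReal := by
    intro s hs
    rw [integral_eq_lintegral_pos_part_sub_lintegral_neg_part (hf.restrict),
      hνp, hνm, withDensity_apply _ hs, withDensity_apply _ hs]
  have hIic : ∀ a : ℝ, νp (Iic a) = νm (Iic a) := by
    intro a
    have := hrepr (Iic a) measurableSet_Iic
    rw [key a] at this
    have h2 : (νp (Iic a)).toReal = (νm (Iic a)).toReal := by linarith
    exact (ENNReal.toReal_eq_toReal_iff' (measure_ne_top _ _) (measure_ne_top _ _)).mp h2
  have hνeq : νp = νm := Measure.ext_of_Iic νp νm hIic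
  refine hf.ae_eq_zero_of_forall_setIntegral_eq_zero (fun s hs _ => ?_)
  rw [hrepr s hs, hνeq, sub_self]

/-- If `|u| ≤ t̃` a.e. with `t̃ > 0` and a.e. `(S*Su)(x) > 0 ⟹ u(x) = −t̃`,
`(S*Su)(x) < 0 ⟹ u(x) = t̃`, then `S*Su = 0`, hence `u = 0`; consequently `u` is
not a minimizer of `‖Sv‖² − (1/2)‖v‖²` over `{v : |v| ≤ t̃ a.e.}`. -/
theorem no_minimizer_with_positive_t
    (S : Lp ℝ 2 μ01 →L[ℝ] Lp ℝ 2 μ01)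
    (hS : ∀ u : Lp ℝ 2 μ01, ∀ᵐ x ∂μ01, (S u : ℝ → ℝ) x = ∫ ξ in Ioo 0 x, u ξ)
    (ttil : ℝ) (httil : 0 < ttil)
    (u : Lp ℝ 2 μ01) (hu : ∀ᵐ x ∂μ01, |u x| ≤ ttil)
    (himp : ∀ᵐ x ∂μ01,
      ((ContinuousLinearMap.adjoint S (S u) : ℝ → ℝ) x > 0 → u x = -ttil) ∧
      ((ContinuousLinearMap.adjoint S (S u) : ℝ → ℝ) x < 0 → u x = ttil)) :
    ContinuousLinearMap.adjoint S (S u) = 0 ∧ u = 0 ∧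
      ¬ (∀ v : Lp ℝ 2 μ01, (∀ᵐ x ∂μ01, |v x| ≤ ttil) →
        ‖S u‖ ^ 2 - (1 / 2) * ‖u‖ ^ 2 ≤ ‖S v‖ ^ 2 - (1 / 2) * ‖v‖ ^ 2) := by
  set w : Lp ℝ 2 μ01 := ContinuousLinearMap.adjoint S (S u) with hw
  -- Step 1 : S u = 0
  have hadj : (inner ℝ w u : ℝ) = ‖S u‖ ^ 2 := by
    rw [hw, ContinuousLinearMap.adjoint_inner_left, real_inner_self_eq_norm_sq]
  have hinner : (inner ℝ w u : ℝ) = ∫ a, (w : ℝ → ℝ) a * (u : ℝ → ℝ) a ∂μ01 := by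
    rw [L2.inner_def]
    simp [RCLike.inner_apply, starRingEnd_apply, mul_comm]
  have hneg : ∀ᵐ a ∂μ01, (w : ℝ → ℝ) a * (u : ℝ → ℝ) a ≤ 0 := by
    filter_upwards [himp] with a ⟨h1, h2⟩
    rcases lt_trichotomy ((w : ℝ → ℝ) a) 0 with hlt | heq | hgt
    · rw [h2 hlt]; nlinarith
    · rw [heq]; simp
    · rw [h1 hgt]; nlinarith
  have hSu : S u = 0 := by
    have h1 : ‖S u‖ ^ 2 ≤ 0 := by
      rw [← hadj, hinner]; exact integral_nonpos_of_ae hneg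
    have h2 : ‖S u‖ = 0 := by nlinarith [norm_nonneg (S u)]
    exact norm_eq_zero.mp h2
  have hw0 : ContinuousLinearMap.adjoint S (S u) = 0 := by rw [hSu, map_zero]
  -- Step 2 : u = 0
  have hint : Integrable (fun x => (u : ℝ → ℝ) x) μ01 :=
    (Lp.memLp u).integrable (by norm_num)
  have hprim : ∀ᵐ x ∂μ01, (∫ ξ in Ioo 0 x, (u : ℝ → ℝ) ξ) = 0 := by
    have hz : (S u : ℝ → ℝ) =ᶠ[ae μ01] 0 := by
      rw [hSu]; exact Lp.coeFn_zero ℝ 2 μ01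
    filter_upwards [hS u, hz] with x h1 h2
    rw [← h1, h2]; rfl
  have huae : (u : ℝ → ℝ) =ᶠ[ae μ01] 0 := primitive_zero _ hint hprim
  have hu0 : u = 0 := by
    ext1
    exact huae.trans (Lp.coeFn_zero ℝ 2 μ01).symm
  refine ⟨hw0, hu0, ?_⟩
  -- Step 3 : not a minimizer
  intro H
  set v : Lp ℝ 2 μ01 := MemLp.toLp _ (memLp_const ttil) with hv
  have hvcoe : (v : ℝ → ℝ) =ᶠ[ae μ01] fun _ => ttil := (memLp_const ttil).coeFn_toLp
  have hvbd : ∀ᵐ x ∂μ01, |(v : ℝ → ℝ) x| ≤ ttil := by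
    filter_upwards [hvcoe] with x hx
    rw [hx, abs_of_pos httil]
  have hμuniv : (μ01 univ).toReal = 1 := by
    simp [μ01, Real.volume_Ioo, Measure.restrict_apply_univ]
  have hvnorm : ‖v‖ ^ 2 = ttil ^ 2 := by
    rw [← real_inner_self_eq_norm_sq, L2.inner_def]
    have : ∫ a, (inner ℝ ((v : ℝ → ℝ) a) ((v : ℝ → ℝ) a) : ℝ) ∂μ01
        = ∫ _ : ℝ, ttil * ttil ∂μ01 := by
      apply integral_congr_ae
      filter_upwards [hvcoe] with a ha
      rw [RCLike.inner_apply, starRingEnd_apply, ha]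
      simp
    rw [this, integral_const, measureReal_def, hμuniv]
    ring_nf
  have hSvae : ∀ᵐ x ∂μ01, (S v : ℝ → ℝ) x = ttil * x := by
    have hmem : ∀ᵐ x ∂μ01, x ∈ Ioo (0:ℝ) 1 :=
      ae_restrict_mem measurableSet_Ioo
    filter_upwards [hS v, hmem] with x h1 hx
    rw [h1]
    have hsub : Ioo (0:ℝ) x ⊆ Ioo 0 1 := Ioo_subset_Ioo (le_refl _) hx.2.le
    have hvres : ∀ᵐ ξ ∂(volume.restrict (Ioo 0 x)), (v : ℝ → ℝ) ξ = ttil :=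
      ae_restrict_of_ae_restrict_of_subset hsub hvcoe
    rw [integral_congr_ae hvres, setIntegral_const, measureReal_def, Real.volume_Ioo, smul_eq_mul,
      ENNReal.toReal_ofReal (by linarith [hx.1] : (0:ℝ) ≤ x - 0)]
    ring
  have hSvnorm : ‖S v‖ ^ 2 = ttil ^ 2 / 3 := by
    rw [← real_inner_self_eq_norm_sq, L2.inner_def]
    have h1 : ∫ a, (inner ℝ ((S v : ℝ → ℝ) a) ((S v : ℝ → ℝ) a) : ℝ) ∂μ01
        = ∫ a in Ioo (0:ℝ) 1, ttil ^ 2 * a ^ 2 := by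
      apply integral_congr_ae
      filter_upwards [hSvae] with a ha
      rw [RCLike.inner_apply, starRingEnd_apply, ha]
      simp; ring
    rw [h1]
    rw [← integral_Ioc_eq_integral_Ioo,
      ← intervalIntegral.integral_of_le (by norm_num : (0:ℝ) ≤ 1)]
    rw [intervalIntegral.integral_const_mul, integral_pow]
    norm_num
    ring
  have := H v hvbd
  rw [hSu, hu0, hvnorm, hSvnorm] at this
  simp only [norm_zero] at this
  nlinarith
end

section
/- For every h > 0, the functional f_h(t, u) = t² + ‖Su‖²_{L²} − (1/2)‖u‖²_{L²} − h·t has no local minimizer on the closed convex cone C = {(t,u) ∈ ℝ × L²(0,1) : |u| ≤ t a.e.}. -/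
open MeasureTheory Set Filter intervalIntegral
open scoped ENNReal

namespace NoMinAux

lemma μ01_def : μ01 = volume.restrict (Ioo 0 1) := rfl

lemma μ01_univ : μ01 univ = 1 := by
  simp [μ01_def, Real.volume_Ioo]

instance : IsFiniteMeasure μ01 :=
  ⟨by rw [μ01_univ]; exact ENNReal.one_lt_top⟩

lemma μ01_ne_zero : μ01 ≠ 0 := by
  intro h
  have := μ01_univ
  rw [h] at this
  simp at this

lemma μ01_le_volume (s : Set ℝ) : μ01 s ≤ volume s :=
  Measure.restrict_le_self s

lemma inner_eq (f g : Lp ℝ 2 μ01) : (inner ℝ f g : ℝ) = ∫ x, f x * g x ∂μ01 := by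
  rw [L2.inner_def]
  congr 1
  ext x
  simp [mul_comm]

lemma norm_sq_eq (f : Lp ℝ 2 μ01) : ‖f‖ ^ 2 = ∫ x, f x * f x ∂μ01 := by
  rw [← real_inner_self_eq_norm_sq, inner_eq]

lemma norm_sq_eq' (f : Lp ℝ 2 μ01) : ‖f‖ ^ 2 = ∫ x, (f x) ^ 2 ∂μ01 := by
  rw [norm_sq_eq]
  congr 1
  ext x
  ring

/-- canonical strongly measurable representative supported in `(0,1)` -/
noncomputable def um (u : Lp ℝ 2 μ01) : ℝ → ℝ :=
  (Ioo 0 1).indicator ((Lp.aestronglyMeasurable u).mk u)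

lemma um_sm (u : Lp ℝ 2 μ01) : StronglyMeasurable (um u) :=
  ((Lp.aestronglyMeasurable u).stronglyMeasurable_mk).indicator measurableSet_Ioo

lemma um_meas (u : Lp ℝ 2 μ01) : Measurable (um u) := (um_sm u).measurable

lemma um_ae (u : Lp ℝ 2 μ01) : (u : ℝ → ℝ) =ᵐ[μ01] um u := by
  have h1 := (Lp.aestronglyMeasurable u).ae_eq_mk
  have h2 : ∀ᵐ x ∂μ01, x ∈ Ioo (0:ℝ) 1 := ae_restrict_mem measurableSet_Ioo
  filter_upwards [h1, h2] with x hx hmem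
  simp [um, indicator_of_mem hmem, hx]

lemma um_zero (u : Lp ℝ 2 μ01) {x : ℝ} (hx : x ∉ Ioo (0:ℝ) 1) : um u x = 0 :=
  indicator_of_notMem hx _

lemma um_int_μ01 (u : Lp ℝ 2 μ01) : Integrable (um u) μ01 :=
  ((Lp.memLp u).integrable one_le_two).congr (um_ae u)

lemma um_integrable (u : Lp ℝ 2 μ01) : Integrable (um u) volume := by
  have h : IntegrableOn ((Lp.aestronglyMeasurable u).mk u) (Ioo 0 1) volume := by
    have := um_int_μ01 u
    rw [μ01_def] at this
    refine this.congr ?_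
    have h2 : ∀ᵐ x ∂(volume.restrict (Ioo (0:ℝ) 1)), x ∈ Ioo (0:ℝ) 1 :=
      ae_restrict_mem measurableSet_Ioo
    filter_upwards [h2] with x hx
    simp [um, indicator_of_mem hx]
  rw [← integrable_indicator_iff measurableSet_Ioo] at h
  exact h



/-- primitive of a function from 0 -/
noncomputable def primF (w : ℝ → ℝ) : ℝ → ℝ := fun x => ∫ t in (0:ℝ)..x, w t

lemma primF_cont {w : ℝ → ℝ} (hw : Integrable w volume) : Continuous (primF w) :=
  hw.continuous_primitive 0

lemma primF_eq_Ioo {w : ℝ → ℝ} {x : ℝ} (hx : 0 ≤ x) :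
    primF w x = ∫ t in Ioo 0 x, w t := by
  rw [primF, intervalIntegral.integral_of_le hx, integral_Ioc_eq_integral_Ioo]

lemma primF_bound {w : ℝ → ℝ} (hw : Integrable w volume) (x : ℝ) :
    |primF w x| ≤ ∫ t, |w t| := by
  have habs : Integrable (fun t => |w t|) volume := hw.abs
  have hnn : 0 ≤ᵐ[volume] fun t => |w t| := Eventually.of_forall fun t => abs_nonneg _
  rcases le_total 0 x with hx | hx
  · rw [primF, intervalIntegral.integral_of_le hx]
    calc |∫ t in Ioc 0 x, w t| ≤ ∫ t in Ioc 0 x, |w t| := by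
          simpa using norm_integral_le_integral_norm (μ := volume.restrict (Ioc 0 x)) w
      _ ≤ ∫ t, |w t| := setIntegral_le_integral habs hnn
  · rw [primF, intervalIntegral.integral_symm, abs_neg, intervalIntegral.integral_of_le hx]
    calc |∫ t in Ioc x 0, w t| ≤ ∫ t in Ioc x 0, |w t| := by
          simpa using norm_integral_le_integral_norm (μ := volume.restrict (Ioc x 0)) w
      _ ≤ ∫ t, |w t| := setIntegral_le_integral habs hnn

lemma primF_bounded_int {w : ℝ → ℝ} (hw : Integrable w volume) :
    Integrable (primF w) μ01 := by
  refine Integrable.mono' (integrable_const (∫ t, |w t|)) ?_ ?_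
  · exact ((primF_cont hw).aestronglyMeasurable)
  · exact Eventually.of_forall fun x => by
      simpa [Real.norm_eq_abs] using primF_bound hw x



/-- a.e. identification of `S v` with the explicit primitive of a nice representative. -/
lemma S_eq_prim (S : Lp ℝ 2 μ01 →L[ℝ] Lp ℝ 2 μ01)
    (hS : ∀ u : Lp ℝ 2 μ01, ∀ᵐ x ∂μ01, (S u : ℝ → ℝ) x = ∫ ξ in Ioo 0 x, u ξ)
    (v : Lp ℝ 2 μ01) (vm : ℝ → ℝ) (hvae : (v : ℝ → ℝ) =ᵐ[μ01] vm) :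
    ∀ᵐ x ∂μ01, (S v : ℝ → ℝ) x = primF vm x := by
  have h2 : ∀ᵐ x ∂μ01, x ∈ Ioo (0:ℝ) 1 := ae_restrict_mem measurableSet_Ioo
  filter_upwards [hS v, h2] with x hx hmem
  rw [hx, primF_eq_Ioo hmem.1.le]
  refine integral_congr_ae ?_
  have hsub : Ioo (0:ℝ) x ⊆ Ioo (0:ℝ) 1 := Ioo_subset_Ioo le_rfl hmem.2.le
  have : (v : ℝ → ℝ) =ᵐ[volume.restrict (Ioo 0 x)] vm :=
    ae_restrict_of_ae_restrict_of_subset hsub hvae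
  exact this

/-- the adjoint-side kernel -/
noncomputable def Wfun (u : Lp ℝ 2 μ01) : ℝ → ℝ :=
  fun ξ => ∫ x in ξ..(1:ℝ), primF (um u) x

lemma Wfun_cont (u : Lp ℝ 2 μ01) : Continuous (Wfun u) := by
  have hint : ∀ a b : ℝ, IntervalIntegrable (primF (um u)) volume a b := fun a b =>
    (primF_cont (um_integrable u)).intervalIntegrable a b
  have h := intervalIntegral.continuous_primitive hint 1
  have : Wfun u = fun ξ => -∫ x in (1:ℝ)..ξ, primF (um u) x := by
    funext ξ
    rw [Wfun, intervalIntegral.integral_symm]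
  rw [this]
  exact h.neg

lemma Wfun_eq_Ioo (u : Lp ℝ 2 μ01) {ξ : ℝ} (hξ : ξ ≤ 1) :
    Wfun u ξ = ∫ x in Ioo ξ 1, primF (um u) x := by
  rw [Wfun, intervalIntegral.integral_of_le hξ, integral_Ioc_eq_integral_Ioo]

lemma Wfun_meas (u : Lp ℝ 2 μ01) : Measurable (Wfun u) := (Wfun_cont u).measurable

lemma Wfun_bounded (u : Lp ℝ 2 μ01) : ∃ C : ℝ, ∀ ξ ∈ Icc (0:ℝ) 1, |Wfun u ξ| ≤ C := by
  obtain ⟨C, hC⟩ := isCompact_Icc.exists_bound_of_continuousOn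
    ((Wfun_cont u).continuousOn (s := Icc (0:ℝ) 1))
  exact ⟨C, fun ξ hξ => by simpa [Real.norm_eq_abs] using hC ξ hξ⟩


lemma key (S : Lp ℝ 2 μ01 →L[ℝ] Lp ℝ 2 μ01)
    (hS : ∀ u : Lp ℝ 2 μ01, ∀ᵐ x ∂μ01, (S u : ℝ → ℝ) x = ∫ ξ in Ioo 0 x, u ξ)
    (u v : Lp ℝ 2 μ01) (vm : ℝ → ℝ) (hvm : StronglyMeasurable vm)
    (hv0 : ∀ x, x ∉ Ioo (0:ℝ) 1 → vm x = 0)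
    (hvae : (v : ℝ → ℝ) =ᵐ[μ01] vm) :
    (inner ℝ (S u) (S v) : ℝ) = ∫ ξ, vm ξ * Wfun u ξ ∂μ01 := by
  have hvmμ : Integrable vm μ01 := ((Lp.memLp v).integrable one_le_two).congr hvae
  have hvmvol : Integrable vm volume := by
    have h1 : Integrable vm (volume.restrict (Ioo 0 1)) := by rwa [μ01_def] at hvmμ
    have h2 : (Ioo (0:ℝ) 1).indicator vm = vm := by
      funext x
      by_cases hx : x ∈ Ioo (0:ℝ) 1
      · simp [indicator_of_mem hx]
      · simp [indicator_of_notMem hx, hv0 x hx]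
    rw [← h2]
    exact (integrable_indicator_iff measurableSet_Ioo).2 h1
  set G := primF (um u) with hG
  set D : Set (ℝ × ℝ) := {z : ℝ × ℝ | z.2 < z.1} with hD
  have hDmeas : MeasurableSet D := measurableSet_lt measurable_snd measurable_fst
  set F : ℝ → ℝ → ℝ := fun x ξ => D.indicator (fun _ => (1:ℝ)) (x, ξ) * (G x * vm ξ) with hF
  have step1 : (inner ℝ (S u) (S v) : ℝ) = ∫ x, G x * primF vm x ∂μ01 := by
    rw [inner_eq]
    refine integral_congr_ae ?_
    filter_upwards [S_eq_prim S hS u (um u) (um_ae u), S_eq_prim S hS v vm hvae] with x h1 h2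
    rw [h1, h2]
  have step2 : ∀ᵐ x ∂μ01, G x * primF vm x = ∫ ξ, F x ξ ∂μ01 := by
    filter_upwards [ae_restrict_mem measurableSet_Ioo] with x hx
    have hind : (fun ξ => F x ξ) = fun ξ => G x * ((Iio x).indicator vm ξ) := by
      funext ξ
      by_cases hξ : ξ < x
      · have hmem : (x, ξ) ∈ D := hξ
        simp [hF, indicator_of_mem hmem, indicator_of_mem (mem_Iio.2 hξ)]
      · have hmem : (x, ξ) ∉ D := hξ
        simp [hF, indicator_of_notMem hmem, indicator_of_notMem (fun c => hξ (mem_Iio.1 c))]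
    rw [hind, MeasureTheory.integral_const_mul, MeasureTheory.integral_indicator measurableSet_Iio]
    have hset : ∫ ξ in Iio x, vm ξ ∂μ01 = ∫ ξ in Ioo 0 x, vm ξ := by
      rw [μ01_def, Measure.restrict_restrict measurableSet_Iio]
      congr 1
      rw [show Iio x ∩ Ioo 0 1 = Ioo 0 x from ?_]
      ext ξ
      simp only [mem_inter_iff, mem_Iio, mem_Ioo]
      exact ⟨fun ⟨h1', h2'⟩ => ⟨h2'.1, h1'⟩, fun ⟨h1', h2'⟩ => ⟨h2', h1', h2'.trans_le hx.2.le⟩⟩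
    rw [hset, ← primF_eq_Ioo hx.1.le]
  have hFint : Integrable (Function.uncurry F) (μ01.prod μ01) := by
    have hbase : Integrable (fun z : ℝ × ℝ => G z.1 * vm z.2) (μ01.prod μ01) :=
      (primF_bounded_int (um_integrable u)).mul_prod hvmμ
    have : Function.uncurry F = fun z : ℝ × ℝ =>
        D.indicator (fun _ => (1:ℝ)) z * (G z.1 * vm z.2) := rfl
    rw [this]
    refine hbase.bdd_mul (c := 1) ?_ (Eventually.of_forall fun z => ?_)
    · exact ((stronglyMeasurable_const).indicator hDmeas).aestronglyMeasurable
    · by_cases hz : z ∈ D <;> simp [indicator_of_mem, indicator_of_notMem, hz]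
  have step5 : ∀ᵐ ξ ∂μ01, (∫ x, F x ξ ∂μ01) = vm ξ * Wfun u ξ := by
    filter_upwards [ae_restrict_mem measurableSet_Ioo] with ξ hξ
    have hind : (fun x => F x ξ) = fun x => vm ξ * ((Ioi ξ).indicator G x) := by
      funext x
      by_cases hx : ξ < x
      · have hmem : (x, ξ) ∈ D := hx
        simp only [hF, indicator_of_mem hmem, indicator_of_mem (mem_Ioi.2 hx)]
        ring
      · have hmem : (x, ξ) ∉ D := hx
        simp [hF, indicator_of_notMem hmem, indicator_of_notMem (fun c => hx (mem_Ioi.1 c))]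
    rw [hind, MeasureTheory.integral_const_mul, MeasureTheory.integral_indicator measurableSet_Ioi]
    have hset : ∫ x in Ioi ξ, G x ∂μ01 = ∫ x in Ioo ξ 1, G x := by
      rw [μ01_def, Measure.restrict_restrict measurableSet_Ioi]
      congr 1
      rw [show Ioi ξ ∩ Ioo 0 1 = Ioo ξ 1 from ?_]
      ext x
      simp only [mem_inter_iff, mem_Ioi, mem_Ioo]
      exact ⟨fun ⟨h1', h2'⟩ => ⟨h1', h2'.2⟩, fun ⟨h1', h2'⟩ => ⟨h1', hξ.1.trans h1', h2'⟩⟩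
    rw [hset, ← Wfun_eq_Ioo u hξ.2.le]
  calc (inner ℝ (S u) (S v) : ℝ) = ∫ x, G x * primF vm x ∂μ01 := step1
    _ = ∫ x, ∫ ξ, F x ξ ∂μ01 ∂μ01 := integral_congr_ae step2
    _ = ∫ ξ, ∫ x, F x ξ ∂μ01 ∂μ01 := integral_integral_swap hFint
    _ = ∫ ξ, vm ξ * Wfun u ξ ∂μ01 := integral_congr_ae step5

lemma key_self (S : Lp ℝ 2 μ01 →L[ℝ] Lp ℝ 2 μ01)
    (hS : ∀ u : Lp ℝ 2 μ01, ∀ᵐ x ∂μ01, (S u : ℝ → ℝ) x = ∫ ξ in Ioo 0 x, u ξ)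
    (u : Lp ℝ 2 μ01) :
    ‖S u‖ ^ 2 = ∫ ξ, um u ξ * Wfun u ξ ∂μ01 := by
  rw [← real_inner_self_eq_norm_sq]
  exact key S hS u u (um u) (um_sm u) (fun x hx => um_zero u hx) (um_ae u)



noncomputable def indLp (u : Lp ℝ 2 μ01) (B : Set ℝ) (hB : MeasurableSet B) : Lp ℝ 2 μ01 :=
  MemLp.toLp (B.indicator u) ((Lp.memLp u).indicator hB)

lemma indLp_ae (u : Lp ℝ 2 μ01) (B : Set ℝ) (hB : MeasurableSet B) :
    (indLp u B hB : ℝ → ℝ) =ᵐ[μ01] B.indicator u :=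
  MemLp.coeFn_toLp _

lemma indLp_ae' (u : Lp ℝ 2 μ01) (B : Set ℝ) (hB : MeasurableSet B) :
    (indLp u B hB : ℝ → ℝ) =ᵐ[μ01] B.indicator (um u) := by
  filter_upwards [indLp_ae u B hB, um_ae u] with x h1 h2
  rw [h1]
  by_cases hx : x ∈ B
  · simp [indicator_of_mem hx, h2]
  · simp [indicator_of_notMem hx]

lemma μ01_apply (s : Set ℝ) (hs : MeasurableSet s) : μ01 s = volume (s ∩ Ioo 0 1) :=
  Measure.restrict_apply hs

lemma setIntegral_μ01_of_subset {f : ℝ → ℝ} {B : Set ℝ} (hB : MeasurableSet B)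
    (hBs : B ⊆ Ioo 0 1) : ∫ x in B, f x ∂μ01 = ∫ x in B, f x := by
  rw [μ01_def, Measure.restrict_restrict hB, inter_eq_left.2 hBs]



lemma caseA (S : Lp ℝ 2 μ01 →L[ℝ] Lp ℝ 2 μ01)
    (hS : ∀ u : Lp ℝ 2 μ01, ∀ᵐ x ∂μ01, (S u : ℝ → ℝ) x = ∫ ξ in Ioo 0 x, u ξ)
    (t : ℝ) (u : Lp ℝ 2 μ01) (hpC : ∀ᵐ x ∂μ01, |(u : ℝ → ℝ) x| ≤ t)
    (hSu : ‖S u‖ ≠ 0) (ε : ℝ) (hε : 0 < ε) :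
    ∃ v : Lp ℝ 2 μ01, (∀ᵐ x ∂μ01, |(v : ℝ → ℝ) x| ≤ t) ∧ ‖v - u‖ < ε ∧
      ‖S v‖ ^ 2 - (1/2) * ‖v‖ ^ 2 < ‖S u‖ ^ 2 - (1/2) * ‖u‖ ^ 2 := by
  classical
  set g : ℝ → ℝ := fun ξ => um u ξ * Wfun u ξ with hg
  have hgmeas : Measurable g := (um_meas u).mul (Wfun_meas u)
  have hgint : Integrable g μ01 := by
    obtain ⟨C, hC⟩ := Wfun_bounded u
    have h1 : Integrable (fun ξ => Wfun u ξ * um u ξ) μ01 := by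
      refine (um_int_μ01 u).bdd_mul (c := C) ((Wfun_cont u).aestronglyMeasurable) ?_
      filter_upwards [ae_restrict_mem measurableSet_Ioo] with ξ hξ
      simpa [Real.norm_eq_abs] using hC ξ ⟨hξ.1.le, hξ.2.le⟩
    simpa [hg, mul_comm] using h1
  have hI : (0:ℝ) < ∫ ξ, g ξ ∂μ01 := by
    rw [hg, ← key_self S hS u]
    have : 0 < ‖S u‖ := (norm_nonneg _).lt_of_ne' hSu
    positivity
  have hpos : μ01 {ξ | 0 < g ξ} ≠ 0 := by
    intro hzero
    have hae : ∀ᵐ ξ ∂μ01, g ξ ≤ 0 := by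
      rw [ae_iff]
      convert hzero using 2
      ext ξ
      simp [not_le]
    exact absurd (integral_nonpos_of_ae hae) (not_le.2 hI)
  obtain ⟨n, hn⟩ : ∃ n : ℕ, μ01 {ξ | 1/((n:ℝ)+1) ≤ g ξ} ≠ 0 := by
    by_contra hcon
    push_neg at hcon
    refine hpos (measure_mono_null ?_ (measure_iUnion_null hcon))
    intro ξ hξ
    obtain ⟨k, hk⟩ := exists_nat_one_div_lt (show (0:ℝ) < g ξ from hξ)
    exact mem_iUnion.2 ⟨k, hk.le⟩
  set c : ℝ := 1/((n:ℝ)+1) with hc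
  have hcpos : 0 < c := by positivity
  obtain ⟨m, hm⟩ : ∃ m : ℕ, μ01 ({ξ | c ≤ g ξ} ∩ {ξ | |um u ξ| ≤ (m:ℝ)}) ≠ 0 := by
    by_contra hcon
    push_neg at hcon
    refine hn (measure_mono_null ?_ (measure_iUnion_null hcon))
    intro ξ hξ
    obtain ⟨k, hk⟩ := exists_nat_ge (|um u ξ|)
    exact mem_iUnion.2 ⟨k, hξ, hk⟩
  set M : ℝ := (m:ℝ) + 1 with hM
  have hMpos : (0:ℝ) < M := by positivity
  have hmM : (m:ℝ) ≤ M := by rw [hM]; linarith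
  set P : Set ℝ := ({ξ | c ≤ g ξ} ∩ {ξ | |um u ξ| ≤ (m:ℝ)}) ∩ Ioo 0 1 with hP
  have hPmeas : MeasurableSet P :=
    ((measurableSet_le measurable_const hgmeas).inter
      (measurableSet_le (um_meas u).abs measurable_const)).inter measurableSet_Ioo
  have hPpos : μ01 P ≠ 0 := by
    intro hzero
    refine hm ?_
    have h1 : MeasurableSet ({ξ | c ≤ g ξ} ∩ {ξ | |um u ξ| ≤ (m:ℝ)}) :=
      (measurableSet_le measurable_const hgmeas).inter
        (measurableSet_le (um_meas u).abs measurable_const)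
    rw [μ01_apply _ h1]
    rw [μ01_apply _ hPmeas] at hzero
    simpa [hP, inter_assoc] using hzero
  -- the Lipschitz measure function
  set φ : ℝ → ℝ := fun y => (μ01 (P ∩ Iic y)).toReal with hφ
  have hmono : ∀ y z : ℝ, y ≤ z → φ y ≤ φ z ∧ φ z - φ y ≤ z - y := by
    intro y z hyz
    have hdecomp : P ∩ Iic z = (P ∩ Iic y) ∪ (P ∩ Ioc y z) := by
      ext x
      simp only [mem_inter_iff, mem_Iic, mem_union, mem_Ioc]
      constructor
      · rintro ⟨hxP, hxz⟩
        rcases le_or_gt x y with hxy | hxy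
        · exact Or.inl ⟨hxP, hxy⟩
        · exact Or.inr ⟨hxP, hxy, hxz⟩
      · rintro (⟨hxP, hxy⟩ | ⟨hxP, _, hxz⟩)
        · exact ⟨hxP, hxy.trans hyz⟩
        · exact ⟨hxP, hxz⟩
    have hdisj : Disjoint (P ∩ Iic y) (P ∩ Ioc y z) := by
      refine disjoint_left.2 fun x hx hx' => ?_
      exact absurd hx.2 (not_le.2 hx'.2.1)
    have hunion : μ01 (P ∩ Iic z) = μ01 (P ∩ Iic y) + μ01 (P ∩ Ioc y z) := by
      rw [hdecomp]
      exact measure_union hdisj (hPmeas.inter measurableSet_Ioc)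
    have hb : μ01 (P ∩ Ioc y z) ≤ ENNReal.ofReal (z - y) := by
      calc μ01 (P ∩ Ioc y z) ≤ μ01 (Ioc y z) := measure_mono inter_subset_right
        _ ≤ volume (Ioc y z) := μ01_le_volume _
        _ = ENNReal.ofReal (z - y) := Real.volume_Ioc
    have h1 : φ z = φ y + (μ01 (P ∩ Ioc y z)).toReal := by
      rw [hφ]
      simp only
      rw [hunion, ENNReal.toReal_add (measure_ne_top _ _) (measure_ne_top _ _)]
    constructor
    · rw [h1]
      have h2 : 0 ≤ (μ01 (P ∩ Ioc y z)).toReal := ENNReal.toReal_nonneg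
      linarith
    · rw [h1]
      have := ENNReal.toReal_mono (by exact ENNReal.ofReal_ne_top) hb
      rw [ENNReal.toReal_ofReal (by linarith)] at this
      linarith
  have hφcont : Continuous φ := by
    refine (LipschitzWith.of_dist_le_mul (K := 1) fun y z => ?_).continuous
    rw [Real.dist_eq, Real.dist_eq, NNReal.coe_one, one_mul]
    rcases le_total y z with hyz | hyz
    · rw [abs_sub_comm, abs_of_nonneg (sub_nonneg.2 (hmono y z hyz).1),
        abs_of_nonpos (sub_nonpos.2 hyz), neg_sub]
      exact (hmono y z hyz).2
    · rw [abs_of_nonneg (sub_nonneg.2 (hmono z y hyz).1),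
        abs_of_nonneg (sub_nonneg.2 hyz)]
      exact (hmono z y hyz).2
  have hφ0 : φ 0 = 0 := by
    have hempty : P ∩ Iic (0:ℝ) = ∅ := by
      ext x
      simp only [mem_inter_iff, mem_Iic, mem_empty_iff_false, iff_false, not_and]
      intro hxP
      exact not_le.2 hxP.2.1
    simp [hφ, hempty]
  set m0 : ℝ := (μ01 P).toReal with hm0
  have hm0pos : 0 < m0 := ENNReal.toReal_pos hPpos (measure_ne_top _ _)
  have hφ1 : φ 1 = m0 := by
    have : P ∩ Iic (1:ℝ) = P := inter_eq_left.2 fun x hx => hx.2.2.le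
    rw [hφ]; simp only; rw [this]
  set θ : ℝ := (min m0 (min (c/(M^2)) (ε^2/(4*M^2))))/2 with hθ
  have hθpos : 0 < θ := by
    rw [hθ]
    have h1 : 0 < c/(M^2) := by positivity
    have h2 : 0 < ε^2/(4*M^2) := by positivity
    have := lt_min hm0pos (lt_min h1 h2)
    linarith
  have hθm0 : θ ≤ m0 := by
    rw [hθ]
    have := min_le_left m0 (min (c/(M^2)) (ε^2/(4*M^2)))
    linarith
  have hθc : θ < c/(M^2) := by
    rw [hθ]
    have h1 := (min_le_right m0 _).trans (min_le_left (c/(M^2)) (ε^2/(4*M^2)))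
    have h2 : 0 < c/(M^2) := by positivity
    linarith
  have hθε : θ < ε^2/(4*M^2) := by
    rw [hθ]
    have h1 := (min_le_right m0 _).trans (min_le_right (c/(M^2)) (ε^2/(4*M^2)))
    have h2 : 0 < ε^2/(4*M^2) := by positivity
    linarith
  obtain ⟨y, _, hyθ⟩ : ∃ y ∈ Icc (0:ℝ) 1, φ y = θ := by
    have := intermediate_value_Icc (by norm_num : (0:ℝ) ≤ 1) hφcont.continuousOn
    have hmem : θ ∈ Icc (φ 0) (φ 1) := by
      rw [hφ0, hφ1]
      exact ⟨hθpos.le, hθm0⟩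
    obtain ⟨y, hy, hyθ⟩ := this hmem
    exact ⟨y, hy, hyθ⟩
  set B : Set ℝ := P ∩ Iic y with hB
  have hBmeas : MeasurableSet B := hPmeas.inter measurableSet_Iic
  have hBμ : (μ01 B).toReal = θ := hyθ
  have hBP : B ⊆ P := inter_subset_left
  have hBsub : B ⊆ Ioo 0 1 := fun x hx => hx.1.2
  -- the flipped element
  set uB : Lp ℝ 2 μ01 := indLp u B hBmeas with huB
  set v : Lp ℝ 2 μ01 := u - (2:ℝ) • uB with hv
  have hvae : ∀ᵐ x ∂μ01, (v : ℝ → ℝ) x = u x - 2 * (B.indicator u x) := by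
    filter_upwards [Lp.coeFn_sub u ((2:ℝ) • uB), Lp.coeFn_smul (2:ℝ) uB,
      indLp_ae u B hBmeas] with x h1 h2 h3
    rw [hv, h1, Pi.sub_apply, h2, Pi.smul_apply, h3, smul_eq_mul]
  refine ⟨v, ?_, ?_, ?_⟩
  · -- cone membership
    filter_upwards [hvae, hpC] with x h1 h2
    rw [h1]
    by_cases hx : x ∈ B
    · rw [indicator_of_mem hx]
      have : (u : ℝ → ℝ) x - 2 * (u x) = -(u x) := by ring
      rw [this, abs_neg]
      exact h2
    · rw [indicator_of_notMem hx]
      simpa using h2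
  · -- distance
    have huBsq : ‖uB‖ ^ 2 ≤ M^2 * θ := by
      rw [norm_sq_eq' uB]
      have hb : ∀ᵐ x ∂μ01, ((uB : ℝ → ℝ) x)^2 ≤ B.indicator (fun _ => M^2) x := by
        filter_upwards [indLp_ae' u B hBmeas] with x h1
        rw [h1]
        by_cases hx : x ∈ B
        · rw [indicator_of_mem hx, indicator_of_mem hx]
          have hxm : |um u x| ≤ (m:ℝ) := (hBP hx).1.2
          have : |um u x| ≤ M := hxm.trans hmM
          calc (um u x)^2 = |um u x|^2 := (sq_abs _).symm
            _ ≤ M^2 := pow_le_pow_left₀ (abs_nonneg _) this 2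
        · rw [indicator_of_notMem hx, indicator_of_notMem hx]
          norm_num
      have hint1 : Integrable (fun x => ((uB : ℝ → ℝ) x)^2) μ01 :=
        (Lp.memLp uB).integrable_sq
      have hint2 : Integrable (B.indicator (fun _ => M^2)) μ01 :=
        (integrable_const _).indicator hBmeas
      calc ∫ x, ((uB : ℝ → ℝ) x)^2 ∂μ01 ≤ ∫ x, B.indicator (fun _ => M^2) x ∂μ01 :=
            integral_mono_ae hint1 hint2 hb
        _ = M^2 * θ := by
            rw [MeasureTheory.integral_indicator hBmeas, setIntegral_const, measureReal_def, hBμ,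
              smul_eq_mul, mul_comm]
    have hvu : v - u = -((2:ℝ) • uB) := by rw [hv]; abel
    have hnorm : ‖v - u‖ = 2 * ‖uB‖ := by
      rw [hvu, norm_neg, norm_smul]
      simp [Real.norm_eq_abs]
    rw [hnorm]
    have h4 : (2 * ‖uB‖)^2 ≤ 4 * (M^2 * θ) := by nlinarith [norm_nonneg uB]
    have h5 : 4 * (M^2 * θ) < ε^2 := by
      have := (mul_lt_mul_of_pos_left hθε (by positivity : (0:ℝ) < 4 * M^2))
      calc 4 * (M^2 * θ) = 4 * M^2 * θ := by ring
        _ < 4 * M^2 * (ε^2/(4*M^2)) := by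
            exact mul_lt_mul_of_pos_left hθε (by positivity)
        _ = ε^2 := by field_simp
    refine lt_of_pow_lt_pow_left₀ 2 hε.le ?_
    calc (2*‖uB‖)^2 ≤ 4 * (M^2 * θ) := h4
      _ < ε^2 := h5
  · -- the decrease
    have hkeyB : (inner ℝ (S u) (S uB) : ℝ) = ∫ ξ in B, g ξ ∂μ01 := by
      have h1 := key S hS u uB (B.indicator (um u))
        ((um_sm u).indicator hBmeas)
        (fun x hx => by
          have hxB : x ∉ B := fun hc => hx (hBsub hc)
          exact indicator_of_notMem hxB _)
        (indLp_ae' u B hBmeas)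
      rw [h1, ← MeasureTheory.integral_indicator hBmeas]
      refine integral_congr_ae (Eventually.of_forall fun ξ => ?_)
      by_cases hξ : ξ ∈ B
      · simp only [indicator_of_mem hξ, hg]
      · simp only [indicator_of_notMem hξ, zero_mul]
    have hinner_lb : c * θ ≤ (inner ℝ (S u) (S uB) : ℝ) := by
      rw [hkeyB, ← hBμ, ← measureReal_def, mul_comm, ← smul_eq_mul]
      exact setIntegral_ge_of_const_le hBmeas (measure_ne_top _ _)
        (fun ξ hξ => (hBP hξ).1.1) hgint.integrableOn
    -- ‖S uB‖² ≤ (M θ)²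
    have hSuBsq : ‖S uB‖ ^ 2 ≤ (M * θ)^2 := by
      have hindint : Integrable (B.indicator (um u)) volume :=
        (um_integrable u).indicator hBmeas
      have hJ : (∫ s, |B.indicator (um u) s|) ≤ M * θ := by
        have habs : (fun s => |B.indicator (um u) s|) = B.indicator (fun s => |um u s|) := by
          funext s
          by_cases hs : s ∈ B
          · rw [indicator_of_mem hs, indicator_of_mem hs]
          · rw [indicator_of_notMem hs, indicator_of_notMem hs, abs_zero]
        rw [habs, MeasureTheory.integral_indicator hBmeas,
          ← setIntegral_μ01_of_subset hBmeas hBsub]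
        calc ∫ s in B, |um u s| ∂μ01 ≤ ∫ _ in B, M ∂μ01 := by
              refine setIntegral_mono_on ((um_int_μ01 u).abs.integrableOn) ?_ hBmeas ?_
              · exact integrableOn_const (measure_ne_top _ _)
              · exact fun s hs => ((hBP hs).1.2).trans hmM
          _ = M * θ := by rw [setIntegral_const, measureReal_def, hBμ, smul_eq_mul, mul_comm]
      have hb : ∀ᵐ x ∂μ01, ((S uB : ℝ → ℝ) x)^2 ≤ (M*θ)^2 := by
        filter_upwards [S_eq_prim S hS uB (B.indicator (um u)) (indLp_ae' u B hBmeas)]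
          with x h1
        rw [h1]
        have h2 := (primF_bound hindint x).trans hJ
        calc (primF (B.indicator (um u)) x)^2 = |primF (B.indicator (um u)) x|^2 :=
              (sq_abs _).symm
          _ ≤ (M*θ)^2 := pow_le_pow_left₀ (abs_nonneg _) h2 2
      rw [norm_sq_eq' (S uB)]
      calc ∫ x, ((S uB : ℝ → ℝ) x)^2 ∂μ01 ≤ ∫ _, (M*θ)^2 ∂μ01 :=
            integral_mono_ae (Lp.memLp (S uB)).integrable_sq (integrable_const _) hb
        _ = (M*θ)^2 := by
            rw [MeasureTheory.integral_const, measureReal_def, μ01_univ]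
            simp
    -- ⟪u, uB⟫ = ‖uB‖²
    have hinner_uuB : (inner ℝ u uB : ℝ) = ‖uB‖^2 := by
      rw [inner_eq, norm_sq_eq]
      refine integral_congr_ae ?_
      filter_upwards [indLp_ae u B hBmeas] with x h1
      rw [h1]
      by_cases hx : x ∈ B
      · rw [indicator_of_mem hx]
      · rw [indicator_of_notMem hx, mul_zero, mul_zero]
    have hnormv : ‖v‖^2 = ‖u‖^2 := by
      rw [hv, norm_sub_sq_real, real_inner_smul_right, hinner_uuB, norm_smul]
      simp only [Real.norm_ofNat]
      ring
    have hSv : S v = S u - (2:ℝ) • (S uB) := by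
      rw [hv, map_sub, _root_.map_smul]
    have hSvsq : ‖S v‖^2 = ‖S u‖^2 - 4 * (inner ℝ (S u) (S uB) : ℝ) + 4 * ‖S uB‖^2 := by
      rw [hSv, norm_sub_sq_real, real_inner_smul_right, norm_smul]
      simp only [Real.norm_ofNat]
      ring
    rw [hnormv, hSvsq]
    have hθM2c : M^2 * θ < c := by
      have := mul_lt_mul_of_pos_left hθc (by positivity : (0:ℝ) < M^2)
      calc M^2 * θ < M^2 * (c/(M^2)) := this
        _ = c := by field_simp
    have h6 : M^2*θ*θ < c*θ := mul_lt_mul_of_pos_right hθM2c hθpos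
    have h7 : (M*θ)^2 = M^2*θ*θ := by ring
    linarith [hinner_lb, hSuBsq]



lemma prim_zero_left {w : ℝ → ℝ} (hsupp : ∀ x ∉ Ioo (0:ℝ) 1, w x = 0) {x : ℝ} (hx : x ≤ 0) :
    primF w x = 0 := by
  rw [primF, intervalIntegral.integral_symm, intervalIntegral.integral_of_le hx]
  rw [setIntegral_congr_fun measurableSet_Ioc (g := fun _ => (0:ℝ))]
  · simp
  · intro z hz
    exact hsupp z (fun hc => absurd (hc.1.trans_le hz.2) (lt_irrefl 0))

/-- if the primitive vanishes a.e. on `(0,1)`, then `u` has zero norm -/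
lemma caseB_zero (u : Lp ℝ 2 μ01) (hG0 : ∀ᵐ x ∂μ01, primF (um u) x = 0) : ‖u‖ = 0 := by
  have hwint := um_integrable u
  have hcont := primF_cont hwint
  have hsupp : ∀ x ∉ Ioo (0:ℝ) 1, um u x = 0 := fun x hx => um_zero u hx
  -- step a: primF vanishes on [0,1]
  have hbadmeas : MeasurableSet {x | primF (um u) x ≠ 0} :=
    ((isClosed_eq hcont continuous_const).measurableSet).compl
  have hbadnull : volume ({x | primF (um u) x ≠ 0} ∩ Ioo 0 1) = 0 := by
    have h1 : μ01 {x | primF (um u) x ≠ 0} = 0 := by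
      rw [← ae_iff] at *
      exact hG0
    rwa [μ01_apply _ hbadmeas] at h1
  have hIcc : ∀ x ∈ Icc (0:ℝ) 1, primF (um u) x = 0 := by
    intro x hx
    have hclosed : IsClosed {z : ℝ | primF (um u) z = 0} := isClosed_eq hcont continuous_const
    have hmemcl : x ∈ closure {z : ℝ | primF (um u) z = 0} := by
      rw [Metric.mem_closure_iff]
      intro δ hδ
      set lo := max 0 (x - δ/2) with hlo
      set hi := min 1 (x + δ/2) with hhi
      have hlohi : lo < hi := by
        rw [hlo, hhi, max_lt_iff]
        constructor
        · rw [lt_min_iff]; constructor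
          · norm_num
          · have := hx.1; linarith
        · rw [lt_min_iff]; constructor
          · have := hx.2; linarith
          · linarith
      have hsub : Ioo lo hi ⊆ Ioo 0 1 := fun z hz =>
        ⟨(le_max_left _ _).trans_lt hz.1, hz.2.trans_le (min_le_left _ _)⟩
      have hvol : volume (Ioo lo hi \ ({x | primF (um u) x ≠ 0} ∩ Ioo 0 1)) ≠ 0 := by
        rw [measure_diff_null hbadnull, Real.volume_Ioo]
        simp only [ne_eq, ENNReal.ofReal_eq_zero, not_le]
        linarith
      obtain ⟨z, hz⟩ := nonempty_of_measure_ne_zero hvol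
      have hz1 : z ∈ Ioo lo hi := hz.1
      have hz2 : primF (um u) z = 0 := by
        by_contra hc
        exact hz.2 ⟨hc, hsub hz1⟩
      refine ⟨z, hz2, ?_⟩
      rw [Real.dist_eq, abs_sub_lt_iff]
      constructor
      · have h1 : lo ≥ x - δ/2 := le_max_right _ _
        have := hz1.1
        linarith
      · have h1 : hi ≤ x + δ/2 := min_le_right _ _
        have := hz1.2
        linarith
    exact hclosed.closure_subset hmemcl
  -- step b: primF vanishes everywhere
  have hall : ∀ x : ℝ, primF (um u) x = 0 := by
    intro x
    rcases le_total x 0 with hx | hx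
    · exact prim_zero_left hsupp hx
    rcases le_total x 1 with hx1 | hx1
    · exact hIcc x ⟨hx, hx1⟩
    · have hadd : primF (um u) 1 + ∫ s in (1:ℝ)..x, um u s = primF (um u) x :=
        integral_add_adjacent_intervals hwint.intervalIntegrable
          hwint.intervalIntegrable
      have h2 : ∫ s in (1:ℝ)..x, um u s = 0 := by
        rw [intervalIntegral.integral_of_le hx1]
        rw [setIntegral_congr_fun measurableSet_Ioc (g := fun _ => (0:ℝ))]
        · simp
        · intro z hz
          exact hsupp z (fun hc => absurd hc.2 (not_lt.2 hz.1.le))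
      rw [← hadd, hIcc 1 ⟨zero_le_one, le_refl 1⟩, h2, add_zero]
  -- step c: interval integrals vanish
  have hIoo : ∀ a b : ℝ, a ≤ b → ∫ ξ in Ioo a b, um u ξ = 0 := by
    intro a b hab
    rw [← integral_Ioc_eq_integral_Ioo, ← intervalIntegral.integral_of_le hab]
    have hadd : primF (um u) a + ∫ s in a..b, um u s = primF (um u) b :=
      integral_add_adjacent_intervals hwint.intervalIntegrable
        hwint.intervalIntegrable
    rw [hall a, hall b, zero_add] at hadd
    exact hadd
  -- helper : μ01 set integrals as volume integrals
  have hμvol : ∀ s : Set ℝ, MeasurableSet s →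
      ∫ ξ in s, um u ξ ∂μ01 = ∫ ξ in s, um u ξ := by
    intro s hs
    rw [μ01_def, Measure.restrict_restrict hs]
    show ∫ ξ in s ∩ Ioo 0 1, (Ioo (0:ℝ) 1).indicator _ ξ = ∫ ξ in s, (Ioo (0:ℝ) 1).indicator _ ξ
    rw [setIntegral_indicator measurableSet_Ioo, setIntegral_indicator measurableSet_Ioo,
      inter_assoc, inter_self]
  have htotal : ∫ ξ, um u ξ ∂μ01 = 0 := by
    rw [μ01_def]
    show ∫ ξ in Ioo (0:ℝ) 1, um u ξ = 0
    exact hIoo 0 1 zero_le_one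
  -- step d : Dynkin
  have hsets : ∀ s : Set ℝ, MeasurableSet s → ∫ ξ in s, um u ξ ∂μ01 = 0 := by
    have hgen : (Real.measurableSpace : MeasurableSpace ℝ) =
        MeasurableSpace.generateFrom (⋃ (a : ℚ) (b : ℚ) (_ : a < b), {Ioo (a : ℝ) (b : ℝ)}) :=
      BorelSpace.measurable_eq.trans Real.borel_eq_generateFrom_Ioo_rat
    intro s hs
    refine MeasurableSpace.induction_on_inter (C := fun s _ => ∫ ξ in s, um u ξ ∂μ01 = 0) hgen Real.isPiSystem_Ioo_rat ?_ ?_ ?_ ?_ s hs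
    · simp
    · rintro t ht
      simp only [mem_iUnion, mem_singleton_iff] at ht
      obtain ⟨a, b, hab, rfl⟩ := ht
      rw [hμvol _ measurableSet_Ioo]
      exact hIoo a b (by exact_mod_cast hab.le)
    · intro t ht hc
      have := integral_add_compl ht (um_int_μ01 u)
      rw [hc, zero_add] at this
      rw [this, htotal]
    · intro f hd hm hz
      rw [integral_iUnion hm hd (um_int_μ01 u).integrableOn]
      simp [hz]
  have hum0 : um u =ᵐ[μ01] 0 :=
    ae_eq_zero_of_forall_setIntegral_eq_of_sigmaFinite
      (fun s hs _ => (um_int_μ01 u).integrableOn)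
      (fun s hs _ => hsets s hs)
  have hu0 : (u : ℝ → ℝ) =ᵐ[μ01] 0 := (um_ae u).trans hum0
  have hsq : ‖u‖ ^ 2 = 0 := by
    rw [norm_sq_eq]
    rw [integral_congr_ae (show (fun x => (u : ℝ → ℝ) x * (u : ℝ → ℝ) x) =ᵐ[μ01]
      (fun _ => (0:ℝ)) from by filter_upwards [hu0] with x hx; simp [hx])]
    simp
  exact (pow_eq_zero_iff two_ne_zero).1 hsq



noncomputable def fV : ℝ → ℝ := fun x => if x < (1/2:ℝ) then 1 else -1

lemma fV_meas : Measurable fV :=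
  Measurable.ite (measurableSet_lt measurable_id measurable_const)
    measurable_const measurable_const

lemma fV_abs (x : ℝ) : |fV x| = 1 := by
  unfold fV; split <;> norm_num

lemma fV_memLp : MemLp fV 2 μ01 :=
  (memLp_top_of_bound fV_meas.aestronglyMeasurable 1
    (Eventually.of_forall fun x => by rw [Real.norm_eq_abs, fV_abs])).mono_exponent le_top

noncomputable def v0 : Lp ℝ 2 μ01 := fV_memLp.toLp fV

lemma v0_ae : (v0 : ℝ → ℝ) =ᵐ[μ01] fV := MemLp.coeFn_toLp _

lemma v0_norm_sq : ‖v0‖ ^ 2 = 1 := by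
  rw [norm_sq_eq' v0]
  rw [integral_congr_ae (show (fun x => ((v0 : ℝ → ℝ) x)^2) =ᵐ[μ01] (fun _ => (1:ℝ)) from by
    filter_upwards [v0_ae] with x hx
    rw [hx, ← sq_abs, fV_abs, one_pow])]
  rw [MeasureTheory.integral_const, measureReal_def, μ01_univ]
  simp

lemma fV_integrableOn (s : Set ℝ) (hs : MeasurableSet s) (hfin : volume s ≠ ⊤) :
    IntegrableOn fV s volume := by
  have hc : IntegrableOn (fun _ => (1:ℝ)) s volume :=
    integrableOn_const hfin
  refine Integrable.mono' hc (fV_meas.aestronglyMeasurable.restrict) ?_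
  exact Eventually.of_forall fun x => by rw [Real.norm_eq_abs, fV_abs]

lemma fV_int_bound {x : ℝ} (hx : x ∈ Ioo (0:ℝ) 1) : |∫ ξ in Ioo 0 x, fV ξ| ≤ 1/2 := by
  rcases le_total x (1/2) with hx2 | hx2
  · have h1 : EqOn fV (fun _ => (1:ℝ)) (Ioo 0 x) := fun z hz =>
      if_pos (lt_of_lt_of_le hz.2 hx2)
    rw [setIntegral_congr_fun measurableSet_Ioo h1]
    rw [setIntegral_const, measureReal_def, Real.volume_Ioo, smul_eq_mul, mul_one,
      ENNReal.toReal_ofReal (by linarith [hx.1] : (0:ℝ) ≤ x - 0)]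
    rw [abs_of_nonneg (by linarith [hx.1])]
    linarith
  · have hsplit : Ioo (0:ℝ) x = Ioo 0 (1/2) ∪ Ico (1/2) x :=
      (Ioo_union_Ico_eq_Ioo (by norm_num) hx2).symm
    have hdisj : Disjoint (Ioo (0:ℝ) (1/2)) (Ico (1/2) x) :=
      disjoint_left.2 fun z hz hz' => absurd hz.2 (not_lt.2 hz'.1)
    rw [hsplit, setIntegral_union hdisj measurableSet_Ico
      (fV_integrableOn _ measurableSet_Ioo (by simp))
      (fV_integrableOn _ measurableSet_Ico (by simp))]
    have h1 : EqOn fV (fun _ => (1:ℝ)) (Ioo 0 (1/2)) := fun z hz => if_pos hz.2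
    have h2 : EqOn fV (fun _ => (-1:ℝ)) (Ico (1/2) x) := fun z hz =>
      if_neg (not_lt.2 hz.1)
    rw [setIntegral_congr_fun measurableSet_Ioo h1]
    rw [setIntegral_congr_fun measurableSet_Ico h2]
    rw [setIntegral_const, setIntegral_const, measureReal_def, measureReal_def, Real.volume_Ioo, Real.volume_Ico]
    rw [ENNReal.toReal_ofReal (by norm_num : (0:ℝ) ≤ 1/2 - 0),
      ENNReal.toReal_ofReal (by linarith : (0:ℝ) ≤ x - 1/2)]
    have hxu := hx.2
    rw [abs_le]
    constructor <;> [skip; skip] <;> simp only [smul_eq_mul] <;> ring_nf <;> linarith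

set_option maxHeartbeats 1000000 in
lemma Sv0_sq (S : Lp ℝ 2 μ01 →L[ℝ] Lp ℝ 2 μ01)
    (hS : ∀ u : Lp ℝ 2 μ01, ∀ᵐ x ∂μ01, (S u : ℝ → ℝ) x = ∫ ξ in Ioo 0 x, u ξ) :
    ‖S v0‖ ^ 2 ≤ 1/4 := by
  have hb : ∀ᵐ x ∂μ01, ((S v0 : ℝ → ℝ) x)^2 ≤ 1/4 := by
    filter_upwards [hS v0, ae_restrict_mem measurableSet_Ioo] with x h1 hmem
    have hv0' : ∀ᵐ ξ ∂(volume.restrict (Ioo (0:ℝ) 1)), (v0 : ℝ → ℝ) ξ = fV ξ := v0_ae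
    have h2 : ∫ ξ in Ioo 0 x, (v0 : ℝ → ℝ) ξ = ∫ ξ in Ioo 0 x, fV ξ :=
      integral_congr_ae (ae_restrict_of_ae_restrict_of_subset
        (Ioo_subset_Ioo le_rfl hmem.2.le) hv0')
    have h3 : |(S v0 : ℝ → ℝ) x| ≤ 1/2 := by
      rw [h1, h2]
      exact fV_int_bound hmem
    calc ((S v0 : ℝ → ℝ) x)^2 = |(S v0 : ℝ → ℝ) x|^2 := (sq_abs _).symm
      _ ≤ (1/2)^2 := pow_le_pow_left₀ (abs_nonneg _) h3 2
      _ = 1/4 := by norm_num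
  rw [norm_sq_eq' (S v0)]
  calc ∫ x, ((S v0 : ℝ → ℝ) x)^2 ∂μ01 ≤ ∫ _, (1/4 : ℝ) ∂μ01 :=
        integral_mono_ae (Lp.memLp (S v0)).integrable_sq (integrable_const _) hb
    _ = 1/4 := by rw [MeasureTheory.integral_const, measureReal_def, μ01_univ]; simp


end NoMinAux
section
open MeasureTheory Set Filter intervalIntegral NoMinAux

set_option maxHeartbeats 1000000 in
/-- Main counterexample: for every `h > 0`, the perturbed functional
`f_h(t,u) = t² + ‖Su‖² − (1/2)‖u‖² − ht` has no local minimizer on the cone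
`C = {(t,u) : |u| ≤ t a.e.}`. -/
theorem perturbed_problem_has_no_local_minimizer
    (S : Lp ℝ 2 μ01 →L[ℝ] Lp ℝ 2 μ01)
    (hS : ∀ u : Lp ℝ 2 μ01, ∀ᵐ x ∂μ01, (S u : ℝ → ℝ) x = ∫ ξ in Ioo 0 x, u ξ)
    (h : ℝ) (hh : 0 < h) :
    ¬ ∃ p : ℝ × Lp ℝ 2 μ01, p ∈ {q : ℝ × Lp ℝ 2 μ01 | ∀ᵐ x ∂μ01, |q.2 x| ≤ q.1} ∧
      IsLocalMinOn
        (fun q : ℝ × Lp ℝ 2 μ01 =>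
          q.1 ^ 2 + ‖S q.2‖ ^ 2 - (1 / 2) * ‖q.2‖ ^ 2 - h * q.1)
        {q : ℝ × Lp ℝ 2 μ01 | ∀ᵐ x ∂μ01, |q.2 x| ≤ q.1} p := by
  rintro ⟨⟨t, u⟩, hpC, hmin⟩
  set C : Set (ℝ × Lp ℝ 2 μ01) := {q : ℝ × Lp ℝ 2 μ01 | ∀ᵐ x ∂μ01, |q.2 x| ≤ q.1} with hC
  set f : ℝ × Lp ℝ 2 μ01 → ℝ := fun q =>
    q.1 ^ 2 + ‖S q.2‖ ^ 2 - (1 / 2) * ‖q.2‖ ^ 2 - h * q.1 with hf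
  have hpC' : ∀ᵐ x ∂μ01, |(u : ℝ → ℝ) x| ≤ t := hpC
  have hmin' : {q : ℝ × Lp ℝ 2 μ01 | f (t, u) ≤ f q} ∈ nhdsWithin (t, u) C := hmin
  obtain ⟨ε, hε, hball⟩ := Metric.mem_nhdsWithin_iff.1 hmin'
  by_cases hSu : ‖S u‖ = 0
  · -- degenerate case : S u = 0, hence u = 0 a.e.
    have hprim0 : ∀ᵐ x ∂μ01, primF (um u) x = 0 := by
      have hz : S u = 0 := norm_eq_zero.1 hSu
      have h1 := S_eq_prim S hS u (um u) (um_ae u)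
      rw [hz] at h1
      filter_upwards [h1, Lp.coeFn_zero ℝ 2 μ01] with x hx hx0
      rw [← hx]
      exact hx0
    have hnu : ‖u‖ = 0 := caseB_zero u hprim0
    have hnu2 : ‖u‖ ^ 2 = 0 := by rw [hnu]; ring
    haveI : (ae μ01).NeBot := ae_neBot.2 μ01_ne_zero
    have ht0 : 0 ≤ t := by
      obtain ⟨x, hx⟩ := hpC'.exists
      exact (abs_nonneg _).trans hx
    rcases lt_or_ge t (h/2) with htlt | htge
    · -- increase t
      set s : ℝ := min (ε/2) ((h - 2*t)/2) with hs
      have hspos : 0 < s := lt_min (by linarith) (by linarith)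
      have hq_mem : ((t + s, u) : ℝ × Lp ℝ 2 μ01) ∈ C := by
        rw [hC]
        filter_upwards [hpC'] with x hx
        exact hx.trans (by linarith)
      have hq_ball : ((t + s, u) : ℝ × Lp ℝ 2 μ01) ∈ Metric.ball (t, u) ε := by
        rw [Metric.mem_ball, Prod.dist_eq]
        have h1 : dist (t + s) t = s := by
          rw [Real.dist_eq]
          rw [abs_of_nonneg (by linarith : (0:ℝ) ≤ t + s - t)]
          ring
        have h2 : dist u u = 0 := dist_self u
        rw [h1, h2]
        have : s ≤ ε/2 := min_le_left _ _
        calc max s 0 = s := max_eq_left hspos.le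
          _ < ε := by linarith
      have hle := hball ⟨hq_ball, hq_mem⟩
      simp only [mem_setOf_eq, hf] at hle
      have hs2 : s ≤ (h - 2*t)/2 := min_le_right _ _
      nlinarith [hle]
    · -- oscillation case : t ≥ h/2 > 0
      have htpos : 0 < t := by linarith
      set s : ℝ := min 1 (ε/(2*t + 1)) with hs
      have hspos : 0 < s := lt_min one_pos (by positivity)
      have hs1 : s ≤ 1 := min_le_left _ _
      have hsε : s * t < ε := by
        have h1 : s ≤ ε/(2*t + 1) := min_le_right _ _
        have h2 : s * t ≤ (ε/(2*t + 1)) * t := by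
          exact mul_le_mul_of_nonneg_right h1 htpos.le
        have h3 : (ε/(2*t + 1)) * t < ε := by
          rw [div_mul_eq_mul_div, div_lt_iff₀ (by linarith : (0:ℝ) < 2*t+1)]
          nlinarith
        linarith
      set w : Lp ℝ 2 μ01 := (s*t) • v0 with hw
      have hq_mem : ((t, w) : ℝ × Lp ℝ 2 μ01) ∈ C := by
        rw [hC]
        filter_upwards [Lp.coeFn_smul (s*t) v0, v0_ae] with x h1 h2
        show |(w : ℝ → ℝ) x| ≤ t
        rw [hw, h1, Pi.smul_apply, smul_eq_mul, h2, abs_mul, fV_abs, mul_one,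
          abs_of_nonneg (by positivity : (0:ℝ) ≤ s*t)]
        nlinarith
      have hq_ball : ((t, w) : ℝ × Lp ℝ 2 μ01) ∈ Metric.ball (t, u) ε := by
        rw [Metric.mem_ball, Prod.dist_eq]
        have h2 : dist w u = ‖w - u‖ := dist_eq_norm _ _
        have hnv0 : ‖v0‖ ≤ 1 := by
          have := v0_norm_sq
          nlinarith [norm_nonneg v0]
        have h3 : ‖w - u‖ ≤ s*t := by
          calc ‖w - u‖ ≤ ‖w‖ + ‖u‖ := norm_sub_le _ _
            _ = ‖w‖ := by rw [hnu, add_zero]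
            _ = s*t * ‖v0‖ := by
                rw [hw, norm_smul, Real.norm_eq_abs,
                  abs_of_nonneg (by positivity : (0:ℝ) ≤ s*t)]
            _ ≤ s*t := mul_le_of_le_one_right (by positivity) hnv0
        rw [dist_self]
        have : dist w u < ε := by rw [h2]; linarith
        calc max (0:ℝ) (dist w u) = dist w u := max_eq_right dist_nonneg
          _ < ε := this
      have hle := hball ⟨hq_ball, hq_mem⟩
      simp only [mem_setOf_eq, hf] at hle
      have hSw : ‖S w‖^2 = (s*t)^2 * ‖S v0‖^2 := by
        rw [hw, _root_.map_smul, norm_smul, Real.norm_eq_abs,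
          abs_of_nonneg (by positivity : (0:ℝ) ≤ s*t)]
        ring
      have hww : ‖w‖^2 = (s*t)^2 := by
        rw [hw, norm_smul, Real.norm_eq_abs,
          abs_of_nonneg (by positivity : (0:ℝ) ≤ s*t)]
        rw [mul_pow]
        nlinarith [v0_norm_sq]
      have hSv0 := Sv0_sq S hS
      have hst : 0 < (s*t)^2 := by positivity
      have hkey : (s*t)^2*‖S v0‖^2 ≤ (s*t)^2*(1/4) :=
        mul_le_mul_of_nonneg_left hSv0 hst.le
      have hSu2 : ‖S u‖^2 = 0 := by rw [hSu]; ring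
      linarith [hle, hnu2, hkey, hSw, hww, hst, hSu2]
  · -- main case
    obtain ⟨v, hv_mem, hv_dist, hv_dec⟩ := caseA S hS t u hpC' hSu ε hε
    have hq_mem : ((t, v) : ℝ × Lp ℝ 2 μ01) ∈ C := hv_mem
    have hq_ball : ((t, v) : ℝ × Lp ℝ 2 μ01) ∈ Metric.ball (t, u) ε := by
      rw [Metric.mem_ball, Prod.dist_eq, dist_self]
      have h2 : dist v u = ‖v - u‖ := dist_eq_norm _ _
      calc max (0:ℝ) (dist v u) = dist v u := max_eq_right dist_nonneg
        _ < ε := by rw [h2]; exact hv_dist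
    have hle := hball ⟨hq_ball, hq_mem⟩
    simp only [mem_setOf_eq, hf] at hle
    linarith [hv_dec]

end
end

section
/- The Volterra operator S on L²(0,1) satisfies: for every nonzero u ∈ L²(0,1), 2‖Su‖² − ‖u‖² can be negative (e.g., taking u highly oscillatory), so the quadratic form (t,u) ↦ 2t² + 2‖Su‖² − ‖u‖² is not coercive on all of ℝ × L²(0,1), but it is coercive (with constant 1/6) on the cone C = {(t,u) : |u| ≤ t a.e.}. -/
open MeasureTheory Set

instance : IsProbabilityMeasure μ01 :=
  ⟨by simp [μ01, Real.volume_Ioo]⟩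

lemma μ01_ne_zero : μ01 ≠ 0 := IsProbabilityMeasure.ne_zero μ01

/-- The step function `f = 1` on `(0,1/2]`, `-1` after. -/
noncomputable def fstep : ℝ → ℝ := fun x => if x ≤ 1/2 then 1 else -1

lemma fstep_meas : Measurable fstep :=
  Measurable.ite measurableSet_Iic measurable_const measurable_const

lemma fstep_norm (x : ℝ) : ‖fstep x‖ = 1 := by
  unfold fstep; split <;> simp

lemma fstep_mem : MemLp fstep 2 μ01 :=
  MemLp.of_bound (fstep_meas.aestronglyMeasurable) 1
    (Filter.Eventually.of_forall fun x => (fstep_norm x).le)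

lemma fstep_integral {x : ℝ} (hx : x ∈ Ioo (0:ℝ) 1) :
    |∫ ξ in Ioo 0 x, fstep ξ| ≤ 1/2 := by
  obtain ⟨hx0, hx1⟩ := hx
  by_cases hx2 : x ≤ 1/2
  · have : ∫ ξ in Ioo 0 x, fstep ξ = ∫ _ξ in Ioo (0:ℝ) x, (1:ℝ) := by
      refine setIntegral_congr_fun measurableSet_Ioo fun ξ hξ => ?_
      have : ξ ≤ 1/2 := le_trans hξ.2.le hx2
      simp only [fstep]; rw [if_pos this]
    rw [this, setIntegral_const, smul_eq_mul, mul_one, measureReal_def, Real.volume_Ioo,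
      ENNReal.toReal_ofReal (by linarith)]
    rw [abs_of_nonneg (by linarith)]
    linarith
  · push_neg at hx2
    have hsplit : Ioo (0:ℝ) x = Ioc 0 (1/2) ∪ Ioo (1/2) x :=
      (Set.Ioc_union_Ioo_eq_Ioo (by norm_num) hx2).symm
    have hdisj : Disjoint (Ioc (0:ℝ) (1/2)) (Ioo (1/2) x) :=
      Set.disjoint_left.mpr fun a ha hb => absurd hb.1 (not_lt.mpr ha.2)
    have hi1 : IntegrableOn fstep (Ioc (0:ℝ) (1/2)) volume := by
      refine ((integrableOn_const_iff (C := (1:ℝ))).mpr (Or.inr ?_)).congr_fun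
        (fun ξ hξ => by simp only [fstep]; rw [if_pos hξ.2]) measurableSet_Ioc
      · simp [Real.volume_Ioc]
    have hi2 : IntegrableOn fstep (Ioo (1/2:ℝ) x) volume := by
      refine ((integrableOn_const_iff (C := (-1:ℝ))).mpr (Or.inr ?_)).congr_fun
        (fun ξ hξ => by simp only [fstep]; rw [if_neg (not_le.mpr hξ.1)]) measurableSet_Ioo
      · simp [Real.volume_Ioo]
    have hv1 : ∫ ξ in Ioc (0:ℝ) (1/2), fstep ξ = 1/2 := by
      have : ∫ ξ in Ioc (0:ℝ) (1/2), fstep ξ = ∫ _ξ in Ioc (0:ℝ) (1/2), (1:ℝ) := by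
        refine setIntegral_congr_fun measurableSet_Ioc fun ξ hξ => by
          simp only [fstep]; rw [if_pos hξ.2]
      rw [this, setIntegral_const, smul_eq_mul, mul_one, measureReal_def, Real.volume_Ioc,
        ENNReal.toReal_ofReal (by norm_num)]
      norm_num
    have hv2 : ∫ ξ in Ioo (1/2:ℝ) x, fstep ξ = -(x - 1/2) := by
      have : ∫ ξ in Ioo (1/2:ℝ) x, fstep ξ = ∫ _ξ in Ioo (1/2:ℝ) x, (-1:ℝ) := by
        refine setIntegral_congr_fun measurableSet_Ioo fun ξ hξ => by
          simp only [fstep]; rw [if_neg (not_le.mpr hξ.1)]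
      rw [this, setIntegral_const, smul_eq_mul, measureReal_def, Real.volume_Ioo,
        ENNReal.toReal_ofReal (by linarith)]
      ring
    rw [hsplit, setIntegral_union hdisj measurableSet_Ioo hi1 hi2, hv1, hv2]
    rw [abs_le]
    constructor <;> linarith

/-- The quadratic form `Q(t,u) = 2t² + 2‖Su‖² − ‖u‖²` is not coercive on all of
`ℝ × L²(0,1)` (indeed `2‖Su‖² − ‖u‖² < 0` for some `u ≠ 0`), but it is coercive
with constant `1/6` on the cone `C = {(t,u) : |u| ≤ t a.e.}`. -/
theorem quadratic_form_coercive_only_on_cone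
    (S : Lp ℝ 2 μ01 →L[ℝ] Lp ℝ 2 μ01)
    (hS : ∀ u : Lp ℝ 2 μ01, ∀ᵐ x ∂μ01, (S u : ℝ → ℝ) x = ∫ ξ in Ioo 0 x, u ξ) :
    (∃ u : Lp ℝ 2 μ01, u ≠ 0 ∧ 2 * ‖S u‖ ^ 2 - ‖u‖ ^ 2 < 0) ∧
    ¬ (∃ β > (0:ℝ), ∀ (t : ℝ) (u : Lp ℝ 2 μ01),
        β * (t ^ 2 + ‖u‖ ^ 2) ≤ 2 * t ^ 2 + 2 * ‖S u‖ ^ 2 - ‖u‖ ^ 2) ∧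
    (∀ (t : ℝ) (u : Lp ℝ 2 μ01), (∀ᵐ x ∂μ01, |u x| ≤ t) →
      (1 / 6) * (t ^ 2 + ‖u‖ ^ 2) ≤ 2 * t ^ 2 + 2 * ‖S u‖ ^ 2 - ‖u‖ ^ 2) := by
  -- the witness u
  set u : Lp ℝ 2 μ01 := fstep_mem.toLp fstep with hu
  have hcoe : (u : ℝ → ℝ) =ᵐ[μ01] fstep := fstep_mem.coeFn_toLp
  -- norm of u is 1
  have hnormu : ‖u‖ = 1 := by
    rw [Lp.norm_def, eLpNorm_congr_ae hcoe, ← eLpNorm_norm,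
      show (fun x => ‖fstep x‖) = fun _ => (1:ℝ) from funext fstep_norm,
      eLpNorm_const (1:ℝ) (by norm_num) μ01_ne_zero]
    simp
  have hune : u ≠ 0 := by
    intro h
    rw [h, norm_zero] at hnormu
    norm_num at hnormu
  -- bound on S u
  have hSbound : ‖S u‖ ≤ 1/2 := by
    have hae : ∀ᵐ x ∂μ01, ‖(S u : ℝ → ℝ) x‖ ≤ 1/2 := by
      filter_upwards [hS u, ae_restrict_mem (μ := volume) measurableSet_Ioo] with x hx hx01
      rw [hx]
      have hsub : Ioo (0:ℝ) x ⊆ Ioo 0 1 := Ioo_subset_Ioo le_rfl hx01.2.le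
      have hcongr : ∫ ξ in Ioo 0 x, (u : ℝ → ℝ) ξ = ∫ ξ in Ioo 0 x, fstep ξ :=
        integral_congr_ae (ae_restrict_of_ae_restrict_of_subset hsub hcoe)
      rw [hcongr, Real.norm_eq_abs]
      exact fstep_integral hx01
    have := Lp.norm_le_of_ae_bound (by norm_num : (0:ℝ) ≤ 1/2) hae
    simpa [measureUnivNNReal, measure_univ] using this
  have hpart1 : 2 * ‖S u‖ ^ 2 - ‖u‖ ^ 2 < 0 := by
    have h0 : (0:ℝ) ≤ ‖S u‖ := norm_nonneg _
    nlinarith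
  refine ⟨⟨u, hune, hpart1⟩, ?_, ?_⟩
  · rintro ⟨β, hβ, hco⟩
    have := hco 0 u
    rw [hnormu] at this hpart1
    nlinarith [hpart1, this]
  · intro t v hv
    -- t ≥ 0
    have : (Filter.NeBot (ae μ01)) := ae_neBot.mpr μ01_ne_zero
    obtain ⟨x, hx⟩ := hv.exists
    have ht : 0 ≤ t := le_trans (abs_nonneg _) hx
    have hvle : ‖v‖ ≤ t := by
      have hae : ∀ᵐ x ∂μ01, ‖(v : ℝ → ℝ) x‖ ≤ t := by
        filter_upwards [hv] with x hx
        rwa [Real.norm_eq_abs]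
      have := Lp.norm_le_of_ae_bound ht hae
      simpa [measureUnivNNReal, measure_univ] using this
    nlinarith [norm_nonneg (S v), norm_nonneg v, sq_nonneg (‖S v‖)]
end
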